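/- arXiv:1501.00223 — 5 statements merged into one kernel-verified Lean document; each statement's English description precedes it below -/
import Mathlib

section
/- Let L and M be fields and ξ transcendental over L such that L ⊊ M ⊆ L(ξ). Then M = L(η) for some η ∈ L(ξ). (Lüroth's Theorem) -/
open Polynomial IntermediateField

namespace Luroth
variable {L : Type} [Field L]

noncomputable instance : NormalizedGCDMonoid (Polynomial L) := by
  classical exact UniqueFactorizationMonoid.toNormalizedGCDMonoid _

variable {L : Type} [Field L]

noncomputable def τ : Polynomial (Polynomial L) →+* Polynomial (Polynomial L) :=
  eval₂RingHom (mapRingHom C) (C X)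

lemma τ_C (p : L[X]) : τ (C p) = p.map C := by
  simp [τ]

lemma τ_monomial (n : ℕ) (p : L[X]) : τ (monomial n p) = p.map C * C (X ^ n) := by
  rw [← C_mul_X_pow_eq_monomial]
  simp only [τ, map_mul, map_pow, coe_eval₂RingHom, eval₂_C, eval₂_X, coe_mapRingHom]

lemma τ_coeff (P : Polynomial (Polynomial L)) (j k : ℕ) :
    ((τ P).coeff k).coeff j = (P.coeff j).coeff k := by
  induction P using Polynomial.induction_on' with
  | add p q hp hq => simp [hp, hq]
  | monomial n p =>
    rw [τ_monomial, coeff_monomial, coeff_mul_C, coeff_map, coeff_C_mul, coeff_X_pow]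
    split_ifs with h1 h2 h2 <;> simp_all

lemma τ_τ (P : Polynomial (Polynomial L)) : τ (τ P) = P := by
  ext j k
  rw [τ_coeff, τ_coeff]

lemma τ_map_C (p : L[X]) : τ (p.map C) = C p := by
  rw [← τ_C, τ_τ]

/-- the natDegree in the "inner" variable -/
lemma natDegree_coeff_le_natDegree_τ (P : Polynomial (Polynomial L)) (j : ℕ) :
    (P.coeff j).natDegree ≤ (τ P).natDegree := by
  rcases eq_or_ne (P.coeff j) 0 with h | h
  · simp [h]
  · apply le_natDegree_of_ne_zero
    intro hco
    apply h
    have := τ_coeff P j ((P.coeff j).natDegree)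
    rw [hco, coeff_zero] at this
    exact leadingCoeff_eq_zero.mp this.symm
  
lemma natDegree_τ_le (P : Polynomial (Polynomial L)) (m : ℕ)
    (h : ∀ j, (P.coeff j).natDegree ≤ m) : (τ P).natDegree ≤ m := by
  rw [natDegree_le_iff_coeff_eq_zero]
  intro k hk
  ext j
  rw [τ_coeff, coeff_zero]
  exact coeff_eq_zero_of_natDegree_lt (lt_of_le_of_lt (h j) hk)

variable {L : Type} [Field L]

lemma unit_of_dvd_coeffs {f g : L[X]} (hco : IsCoprime f g) (hf : f ≠ 0)
    (hnc : ¬(f.natDegree = 0 ∧ g.natDegree = 0))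
    {d : L[X]} (hd : ∀ j, d ∣ (C (f.coeff j) * g - C (g.coeff j) * f)) : IsUnit d := by
  obtain ⟨j, k, he⟩ : ∃ j k, f.coeff j * g.coeff k - f.coeff k * g.coeff j ≠ 0 := by
    by_contra hall
    push_neg at hall
    simp only [sub_eq_zero] at hall
    have hj0 : f.coeff f.natDegree ≠ 0 := leadingCoeff_ne_zero.mpr hf
    set c := g.coeff f.natDegree / f.coeff f.natDegree with hc
    have hg : g = C c * f := by
      ext k
      rw [coeff_C_mul, hc, div_mul_eq_mul_div, eq_div_iff hj0]
      linear_combination (hall f.natDegree k)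
    obtain ⟨u, v, huv⟩ := hco
    have hfu : IsUnit f := by
      refine isUnit_of_dvd_one ⟨u + v * C c, ?_⟩
      rw [← huv, hg]; ring
    have h1 : f.natDegree = 0 := natDegree_eq_zero_of_isUnit hfu
    have h2 : g.natDegree = 0 := by
      rw [hg]
      simpa [h1] using natDegree_mul_le (p := C c) (q := f)
    exact hnc ⟨h1, h2⟩
  have hu : IsUnit (C (f.coeff j * g.coeff k - f.coeff k * g.coeff j) : L[X]) :=
    isUnit_C.mpr (isUnit_iff_ne_zero.mpr he)
  have hdg : d ∣ C (f.coeff j * g.coeff k - f.coeff k * g.coeff j) * g := by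
    have : C (f.coeff j * g.coeff k - f.coeff k * g.coeff j) * g
        = C (g.coeff k) * (C (f.coeff j) * g - C (g.coeff j) * f)
          - C (g.coeff j) * (C (f.coeff k) * g - C (g.coeff k) * f) := by
      simp only [map_sub, map_mul]; ring
    rw [this]
    exact dvd_sub ((hd j).mul_left _) ((hd k).mul_left _)
  have hdf : d ∣ C (f.coeff j * g.coeff k - f.coeff k * g.coeff j) * f := by
    have : C (f.coeff j * g.coeff k - f.coeff k * g.coeff j) * f
        = C (f.coeff k) * (C (f.coeff j) * g - C (g.coeff j) * f)
          - C (f.coeff j) * (C (f.coeff k) * g - C (g.coeff k) * f) := by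
      simp only [map_sub, map_mul]; ring
    rw [this]
    exact dvd_sub ((hd j).mul_left _) ((hd k).mul_left _)
  have hdf' : d ∣ f := (hu.dvd_mul_left).mp hdf
  have hdg' : d ∣ g := (hu.dvd_mul_left).mp hdg
  obtain ⟨u, v, huv⟩ := hco
  exact isUnit_of_dvd_one (huv ▸ dvd_add ((hdf'.mul_left u)) ((hdg'.mul_left v)))

variable {L : Type} [Field L]

noncomputable def q (f g : L[X]) : Polynomial (Polynomial L) :=
  f.map C * C g - g.map C * C f

lemma q_coeff (f g : L[X]) (j : ℕ) :
    (q f g).coeff j = C (f.coeff j) * g - C (g.coeff j) * f := by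
  simp [q, coeff_mul_C]

lemma coeff_max_ne_zero {f g : L[X]} (hco : IsCoprime f g) (hf : f ≠ 0)
    (hnc : ¬(f.natDegree = 0 ∧ g.natDegree = 0)) :
    C (f.coeff (max f.natDegree g.natDegree)) * g
      - C (g.coeff (max f.natDegree g.natDegree)) * f ≠ 0 := by
  set m := max f.natDegree g.natDegree with hm
  intro h0
  rw [sub_eq_zero] at h0
  rcases eq_or_ne (f.coeff m) 0 with hfm | hfm
  · -- then g.natDegree = m and g.coeff m ≠ 0, so C (g.coeff m) * f = 0, f = 0
    have hgm : g.coeff m ≠ 0 := by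
      have h1 : f.natDegree < g.natDegree := by
        by_contra h1
        push_neg at h1
        rw [hm, max_eq_left h1] at hfm
        exact (leadingCoeff_ne_zero.mpr hf) hfm
      have hg0 : g ≠ 0 := fun h => by simp [h] at h1
      rw [hm, max_eq_right h1.le]
      exact leadingCoeff_ne_zero.mpr hg0
    rw [hfm, map_zero, zero_mul] at h0
    rcases mul_eq_zero.mp h0.symm with h | h
    · exact hgm (by simpa using h)
    · exact hf h
  · -- f.coeff m ≠ 0 : g = (g_m/f_m) • f, coprime forces f unit
    have hg : g = C (g.coeff m / f.coeff m) * f := by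
      ext k
      rw [coeff_C_mul, div_mul_eq_mul_div, eq_div_iff hfm]
      have := congrArg (fun p => Polynomial.coeff p k) h0
      simp only [coeff_C_mul] at this
      linear_combination this
    obtain ⟨c, hg⟩ : ∃ c, g = C c * f := ⟨_, hg⟩
    obtain ⟨u, v, huv⟩ := hco
    have hfu : IsUnit f := by
      refine isUnit_of_dvd_one ⟨u + v * C c, ?_⟩
      rw [← huv, hg]; ring
    have h1 : f.natDegree = 0 := natDegree_eq_zero_of_isUnit hfu
    have h2 : g.natDegree = 0 := by
      rw [hg]
      simpa [h1] using natDegree_mul_le (p := C c) (q := f)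
    exact hnc ⟨h1, h2⟩

lemma q_ne_zero {f g : L[X]} (hco : IsCoprime f g) (hf : f ≠ 0)
    (hnc : ¬(f.natDegree = 0 ∧ g.natDegree = 0)) : q f g ≠ 0 := by
  intro h
  apply coeff_max_ne_zero hco hf hnc
  rw [← q_coeff, h, coeff_zero]

lemma natDegree_q {f g : L[X]} (hco : IsCoprime f g) (hf : f ≠ 0)
    (hnc : ¬(f.natDegree = 0 ∧ g.natDegree = 0)) :
    (q f g).natDegree = max f.natDegree g.natDegree := by
  apply le_antisymm
  · apply (natDegree_sub_le _ _).trans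
    simp only [max_le_iff]
    constructor
    · exact (natDegree_mul_le).trans (by simp [natDegree_map_eq_of_injective (C_injective)])
    · exact (natDegree_mul_le).trans (by simp [natDegree_map_eq_of_injective (C_injective)])
  · apply le_natDegree_of_ne_zero
    rw [q_coeff]
    exact coeff_max_ne_zero hco hf hnc

variable {L : Type} [Field L]

lemma algebraMap_eq_aeval (p : L[X]) :
    algebraMap L[X] (RatFunc L) p = aeval RatFunc.X p := by
  have : algebraMap L[X] (RatFunc L) = (aeval RatFunc.X).toRingHom := by
    apply Polynomial.ringHom_ext
    · intro a
      simp [RatFunc.algebraMap_C]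
    · simp [RatFunc.algebraMap_X]
  rw [this]; rfl

lemma transcendental_X : Transcendental L (RatFunc.X : RatFunc L) := by
  intro ⟨p, hp0, hp⟩
  rw [← algebraMap_eq_aeval] at hp
  exact hp0 (IsFractionRing.injective L[X] (RatFunc L) (by simpa using hp))

lemma adjoin_X_top : adjoin L {(RatFunc.X : RatFunc L)} = ⊤ := by
  rw [eq_top_iff]
  intro z _
  have hz : z = algebraMap L[X] (RatFunc L) z.num / algebraMap L[X] (RatFunc L) z.denom :=
    (RatFunc.num_div_denom z).symm
  rw [hz, algebraMap_eq_aeval, algebraMap_eq_aeval]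
  have hX : RatFunc.X ∈ adjoin L {(RatFunc.X : RatFunc L)} :=
    subset_adjoin L _ rfl
  have key : ∀ p : L[X], aeval RatFunc.X p ∈ adjoin L {(RatFunc.X : RatFunc L)} := by
    intro p
    have := (adjoin L {(RatFunc.X : RatFunc L)}).toSubalgebra.aeval_coe ⟨RatFunc.X, hX⟩ p
    simp only at this
    rw [this]
    exact SetLike.coe_mem _
  exact div_mem (key _) (key _)


section rpoly
variable (N : IntermediateField L (RatFunc L)) {a : RatFunc L}

noncomputable def rpoly (ha : a ∈ N) : Polynomial N :=
  (a.num.map (algebraMap L N)) - C (⟨a, ha⟩ : N) * (a.denom.map (algebraMap L N))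

lemma rpoly_map (ha : a ∈ N) : (rpoly N ha).map (algebraMap N (RatFunc L)) =
    a.num.map (algebraMap L (RatFunc L)) - C a * a.denom.map (algebraMap L (RatFunc L)) := by
  simp only [rpoly, Polynomial.map_sub, Polynomial.map_mul, Polynomial.map_map, map_C]
  rw [← IsScalarTower.algebraMap_eq L N (RatFunc L)]
  norm_cast

lemma denom_map_ne_zero (a : RatFunc L) :
    algebraMap L[X] (RatFunc L) a.denom ≠ 0 := by
  rw [Ne, map_eq_zero_iff _ (IsFractionRing.injective L[X] (RatFunc L))]
  exact a.denom_ne_zero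

lemma aeval_rpoly (ha : a ∈ N) : aeval (RatFunc.X : RatFunc L) (rpoly N ha) = 0 := by
  rw [aeval_def, eval₂_eq_eval_map, rpoly_map]
  have h1 : ∀ p : L[X], (p.map (algebraMap L (RatFunc L))).eval (RatFunc.X : RatFunc L)
      = algebraMap L[X] (RatFunc L) p := by
    intro p
    rw [algebraMap_eq_aeval, aeval_def, eval₂_eq_eval_map]
  simp only [eval_sub, eval_mul, eval_C, h1]
  rw [sub_eq_zero, eq_comm, ← eq_div_iff (denom_map_ne_zero a)]
  exact (RatFunc.num_div_denom a).symm

lemma rpoly_ne_zero (ha : a ∈ N) (ha' : a ∉ (⊥ : IntermediateField L (RatFunc L))) :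
    rpoly N ha ≠ 0 := by
  intro h0
  apply ha'
  have hm : (rpoly N ha).map (algebraMap N (RatFunc L)) = 0 := by rw [h0, Polynomial.map_zero]
  rw [rpoly_map, sub_eq_zero] at hm
  have hc := congrArg (fun p => Polynomial.coeff p a.denom.natDegree) hm
  simp only [coeff_map, coeff_C_mul] at hc
  have hld : a.denom.coeff a.denom.natDegree = 1 := a.monic_denom
  rw [hld, map_one, mul_one] at hc
  exact mem_bot.mpr ⟨a.num.coeff a.denom.natDegree, hc⟩

lemma natDegree_rpoly_le (ha : a ∈ N) :
    (rpoly N ha).natDegree ≤ max a.num.natDegree a.denom.natDegree := by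
  apply (natDegree_sub_le _ _).trans
  apply max_le_max
  · exact natDegree_map_le
  · exact (natDegree_C_mul_le _ _).trans natDegree_map_le

lemma isIntegral_X (ha : a ∈ N) (ha' : a ∉ (⊥ : IntermediateField L (RatFunc L))) :
    IsIntegral N (RatFunc.X : RatFunc L) :=
  (IsAlgebraic.isIntegral ⟨rpoly N ha, rpoly_ne_zero N ha ha', aeval_rpoly N ha⟩)

lemma aeval_mem (p : L[X]) :
    algebraMap L[X] (RatFunc L) p ∈ adjoin N {(RatFunc.X : RatFunc L)} := by
  have hX : (RatFunc.X : RatFunc L) ∈ adjoin N {(RatFunc.X : RatFunc L)} :=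
    subset_adjoin _ _ rfl
  have h2 : algebraMap L[X] (RatFunc L) p
      = aeval (RatFunc.X : RatFunc L) (p.map (algebraMap L N)) := by
    rw [algebraMap_eq_aeval, aeval_map_algebraMap]
  rw [h2]
  have h3 := (adjoin N {(RatFunc.X : RatFunc L)}).toSubalgebra.aeval_coe
    ⟨RatFunc.X, hX⟩ (p.map (algebraMap L N))
  simp only at h3
  rw [h3]
  exact SetLike.coe_mem _

lemma adjoin_N_X_top : adjoin N {(RatFunc.X : RatFunc L)} = ⊤ := by
  rw [eq_top_iff]
  intro z _
  rw [← RatFunc.num_div_denom z]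
  exact div_mem (aeval_mem N _) (aeval_mem N _)

lemma finiteDimensional_N (hX : IsIntegral N (RatFunc.X : RatFunc L)) :
    FiniteDimensional N (RatFunc L) := by
  have h1 : FiniteDimensional N (adjoin N {(RatFunc.X : RatFunc L)}) :=
    adjoin.finiteDimensional hX
  rw [adjoin_N_X_top] at h1
  exact h1.of_surjective (IntermediateField.topEquiv (F := N)
    (E := RatFunc L)).toLinearMap (IntermediateField.topEquiv).surjective

lemma finrank_N (hX : IsIntegral N (RatFunc.X : RatFunc L)) :
    Module.finrank N (RatFunc L) = (minpoly N (RatFunc.X : RatFunc L)).natDegree := by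
  have h1 := adjoin.finrank hX
  rwa [adjoin_N_X_top, finrank_top' (F := N) (E := RatFunc L)] at h1

end rpoly


lemma algebraMap_botEquiv (y : (⊥ : IntermediateField L (RatFunc L))) :
    algebraMap L (RatFunc L) (botEquiv L (RatFunc L) y) = (y : RatFunc L) := by
  have h := congrArg (Subtype.val) ((botEquiv L (RatFunc L)).symm_apply_apply y)
  rw [← h, botEquiv_symm]
  rfl

theorem luroth_ratfunc (M₀ : IntermediateField L (RatFunc L)) (hM : ⊥ < M₀) :
    ∃ η, M₀ = adjoin L {η} := by
  classical
  obtain ⟨a₀, ha₀M, ha₀⟩ := SetLike.exists_of_lt hM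
  have hXint : IsIntegral M₀ (RatFunc.X : RatFunc L) := isIntegral_X M₀ ha₀M ha₀
  set p := minpoly M₀ (RatFunc.X : RatFunc L) with hp
  set n := p.natDegree with hn
  have hpmonic : p.Monic := minpoly.monic hXint
  -- some coefficient is not in ⊥
  have hex : ∃ i, ((p.coeff i : M₀) : RatFunc L) ∉ (⊥ : IntermediateField L (RatFunc L)) := by
    by_contra hall
    push_neg at hall
    set l : ℕ → L := fun j => botEquiv L (RatFunc L) ⟨(p.coeff j : RatFunc L), hall j⟩ with hl
    have hlk : ∀ j, algebraMap L (RatFunc L) (l j) = (p.coeff j : RatFunc L) := fun j =>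
      algebraMap_botEquiv _
    set P₀ : L[X] := ∑ j ∈ Finset.range (n+1), Polynomial.monomial j (l j) with hP₀
    have hP₀c : ∀ k, k ≤ n → P₀.coeff k = l k := by
      intro k hk
      rw [hP₀, finset_sum_coeff]
      rw [Finset.sum_eq_single k]
      · simp
      · intro b _ hbk; simp [coeff_monomial, hbk]
      · intro hk'; exact absurd (Finset.mem_range.mpr (by omega)) (fun h => hk' h)
    apply transcendental_X (L := L)
    refine ⟨P₀, ?_, ?_⟩
    · intro h0
      have h1 := hP₀c n le_rfl
      rw [h0, coeff_zero] at h1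
      have h2 := hlk n
      rw [← h1, map_zero] at h2
      have h3 : (p.coeff n : RatFunc L) = 1 := by
        have := hpmonic
        rw [Monic, leadingCoeff, ← hn] at this
        rw [this]; rfl
      rw [h3] at h2
      exact one_ne_zero h2.symm
    · have h0 := minpoly.aeval M₀ (RatFunc.X : RatFunc L)
      rw [← hp] at h0
      rw [Polynomial.aeval_eq_sum_range] at h0
      rw [hP₀, map_sum]
      simp only [aeval_monomial, hlk]
      rw [← hn] at h0
      rw [← h0]
      apply Finset.sum_congr rfl
      intro j _
      rw [Algebra.smul_def]
      rfl
  obtain ⟨i, hai⟩ := hex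
  set a : RatFunc L := (p.coeff i : RatFunc L) with ha
  have haM : a ∈ M₀ := (p.coeff i).2
  have ha0 : a ≠ 0 := fun h => hai (h ▸ zero_mem ⊥)
  set f : L[X] := a.num with hf
  set g : L[X] := a.denom with hg
  set m := max f.natDegree g.natDegree with hm
  have hf0 : f ≠ 0 := RatFunc.num_ne_zero ha0
  have hco : IsCoprime f g := a.isCoprime_num_denom
  have hnc : ¬(f.natDegree = 0 ∧ g.natDegree = 0) := by
    rintro ⟨h1, h2⟩
    apply hai
    have hg1 : g = 1 := (Polynomial.Monic.natDegree_eq_zero a.monic_denom).mp h2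
    have hfC : f = C (f.coeff 0) := eq_C_of_natDegree_eq_zero h1
    rw [mem_bot]
    refine ⟨f.coeff 0, ?_⟩
    rw [IsScalarTower.algebraMap_apply L L[X] (RatFunc L)]
    have : algebraMap L L[X] (f.coeff 0) = f := by
      rw [Polynomial.algebraMap_eq]; exact hfC.symm
    rw [this, ← RatFunc.num_div_denom a, ← hf, ← hg, hg1]
    simp
  -- setup notations
  set φ := algebraMap L[X] (RatFunc L) with hφ
  have hφinj : Function.Injective φ := IsFractionRing.injective _ _
  set p' : (RatFunc L)[X] := p.map (algebraMap M₀ (RatFunc L)) with hp'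
  have hp'0 : p' ≠ 0 := (hpmonic.map _).ne_zero
  have hp'deg : p'.natDegree = n :=
    natDegree_map_eq_of_injective (algebraMap M₀ (RatFunc L)).injective p
  -- p divides rpoly
  obtain ⟨w, hw⟩ : p ∣ rpoly M₀ haM := minpoly.dvd M₀ _ (aeval_rpoly M₀ haM)
  have hga : φ g * a = φ f := by
    conv_lhs => rw [← RatFunc.num_div_denom a]
    rw [mul_comm]
    exact div_mul_cancel₀ _ (denom_map_ne_zero a)
  have hmapC : ∀ u : L[X], (u.map (C : L →+* L[X])).map φ = u.map (algebraMap L (RatFunc L)) := by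
    intro u
    rw [Polynomial.map_map, IsScalarTower.algebraMap_eq L L[X] (RatFunc L),
      Polynomial.algebraMap_eq]
  have hqmap : (q f g).map φ = C (φ g) * ((rpoly M₀ haM).map (algebraMap M₀ (RatFunc L))) := by
    rw [rpoly_map M₀ haM]
    have hga' : C (φ g) * C a = C (φ f) := by rw [← map_mul, hga]
    rw [q, Polynomial.map_sub, Polynomial.map_mul, Polynomial.map_mul, map_C, map_C,
      hmapC, hmapC]
    rw [show f = a.num from hf, show g = a.denom from hg] at hga' ⊢
    linear_combination (Polynomial.map (algebraMap L (RatFunc L)) a.denom) * hga'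
  -- integer normalization and primitive part
  set iN := IsLocalization.integerNormalization (nonZeroDivisors L[X]) p' with hiN
  obtain ⟨b, hb⟩ := IsLocalization.integerNormalization_map_to_map (nonZeroDivisors L[X]) p'
  have hiN0 : iN ≠ 0 := by
    rw [hiN, Ne, IsFractionRing.integerNormalization_eq_zero_iff]
    exact hp'0
  set P := iN.primPart with hP
  have hPprim : P.IsPrimitive := iN.isPrimitive_primPart
  have hcden : φ iN.content ≠ 0 := by
    intro h
    exact hiN0 (content_eq_zero_iff.mp (hφinj (by rw [h, map_zero])))
  have hbne : φ (b : L[X]) ≠ 0 := by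
    intro h
    exact nonZeroDivisors.ne_zero b.2 (hφinj (by rw [h, map_zero]))
  have hiNmap : iN.map φ = C (φ (b : L[X])) * p' := by
    rw [← hiN] at hb
    rw [hb, algebra_compatible_smul (RatFunc L) ((b : L[X])) p', smul_eq_C_mul]
  have hCrel : C (φ iN.content) * P.map φ = C (φ (b : L[X])) * p' := by
    rw [← hiNmap]
    conv_rhs => rw [eq_C_content_mul_primPart iN]
    rw [Polynomial.map_mul, map_C]
  set c := φ (b : L[X]) / φ iN.content with hc
  have hc0 : c ≠ 0 := div_ne_zero hbne hcden
  have hPmap : P.map φ = C c * p' := by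
    have h2 := congrArg (fun z => C (φ iN.content)⁻¹ * z) hCrel
    rw [← mul_assoc, ← map_mul, inv_mul_cancel₀ hcden, map_one, one_mul] at h2
    rw [h2, ← mul_assoc, ← map_mul, hc]
    congr 2
    field_simp
  -- coefficient degree bounds
  have hcoeffP : ∀ k, φ (P.coeff k) = c * p'.coeff k := by
    intro k
    have h2 := congrArg (fun z => Polynomial.coeff z k) hPmap
    simp only [coeff_map, coeff_C_mul] at h2
    exact h2
  have hPn : φ (P.coeff n) = c := by
    have h1 : p'.coeff n = 1 := by
      have h2 := (hpmonic.map (algebraMap M₀ (RatFunc L))).coeff_natDegree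
      rwa [hp'deg] at h2
    rw [hcoeffP n, h1, mul_one]
  have hPi : φ (P.coeff i) = c * a := by
    rw [hcoeffP i]
    congr 1
    rw [hp', coeff_map]
    rfl
  have hkey : P.coeff i * g = P.coeff n * f := by
    apply hφinj
    rw [map_mul, map_mul, hPi, hPn]
    linear_combination c * hga
  have hPn0 : P.coeff n ≠ 0 := fun h => hc0 (by rw [← hPn, h, map_zero])
  have hg0 : g ≠ 0 := a.denom_ne_zero
  have hgPn : g ∣ P.coeff n := by
    exact (hco.symm).dvd_of_dvd_mul_right
      (⟨P.coeff i, by linear_combination -hkey⟩ : g ∣ P.coeff n * f)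
  have hdegg : g.natDegree ≤ (P.coeff n).natDegree := natDegree_le_of_dvd hgPn hPn0
  have hPi0 : P.coeff i ≠ 0 := by
    intro h
    rw [h, zero_mul] at hkey
    exact (mul_ne_zero hPn0 hf0) hkey.symm
  have hdegs : (P.coeff i).natDegree + g.natDegree = (P.coeff n).natDegree + f.natDegree := by
    rw [← natDegree_mul hPi0 hg0, ← natDegree_mul hPn0 hf0, hkey]
  have hτPm : m ≤ (τ P).natDegree := by
    rw [hm]
    apply max_le
    · exact le_trans (by omega) (natDegree_coeff_le_natDegree_τ P i)
    · exact le_trans hdegg (natDegree_coeff_le_natDegree_τ P n)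
  -- Gauss lemma
  have hqprim : (q f g).IsPrimitive := by
    rw [isPrimitive_iff_isUnit_of_C_dvd]
    intro r hr
    rw [C_dvd_iff_dvd_coeff] at hr
    apply unit_of_dvd_coeffs hco hf0 hnc
    intro j
    rw [← q_coeff]
    exact hr j
  have hP0 : P ≠ 0 := by
    intro h
    apply mul_ne_zero (a := (C c : (RatFunc L)[X])) (by simpa using hc0) hp'0
    rw [← hPmap, h, Polynomial.map_zero]
  have hdvd2 : P.map φ ∣ (q f g).map φ := by
    rw [hPmap, hqmap, hw, Polynomial.map_mul]
    refine ⟨C (φ g / c) * (w.map (algebraMap M₀ (RatFunc L))), ?_⟩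
    have h3 : (C c : (RatFunc L)[X]) * C (φ g / c) = C (φ g) := by
      rw [← map_mul]
      congr 1
      field_simp
    rw [← hp']
    linear_combination (-(p' * Polynomial.map (algebraMap (↥M₀) (RatFunc L)) w)) * h3
  obtain ⟨H, hH⟩ : P ∣ q f g :=
    hPprim.dvd_of_fraction_map_dvd_fraction_map hdvd2
  -- degree comparison via τ
  have hq0 : q f g ≠ 0 := q_ne_zero hco hf0 hnc
  have hqdeg : (q f g).natDegree = m := natDegree_q hco hf0 hnc
  have hτq : τ (q f g) = -(q f g) := by
    rw [q, map_sub, map_mul, map_mul, τ_C, τ_C, τ_map_C, τ_map_C]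
    ring
  have hH0 : H ≠ 0 := fun h => hq0 (by rw [hH, h, mul_zero])
  have hτinj : Function.Injective (τ (L := L)) := fun x y hxy => by
    rw [← τ_τ x, hxy, τ_τ]
  have hτP0 : τ P ≠ 0 := fun h => hP0 (by rw [← τ_τ P, h, map_zero])
  have hτH0 : τ H ≠ 0 := fun h => hH0 (by rw [← τ_τ H, h, map_zero])
  have hτqdeg : (τ (q f g)).natDegree = m := by rw [hτq, natDegree_neg, hqdeg]
  have hsum : (τ P).natDegree + (τ H).natDegree = m := by
    rw [← hτqdeg, hH, map_mul, natDegree_mul hτP0 hτH0]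
  have hτHdeg : (τ H).natDegree = 0 := by omega
  have hτPdeg : (τ P).natDegree = m := by omega
  obtain ⟨h, hhc⟩ : ∃ h0, τ H = C h0 := ⟨(τ H).coeff 0, eq_C_of_natDegree_eq_zero hτHdeg⟩
  have hhu : IsUnit h := by
    apply unit_of_dvd_coeffs hco hf0 hnc
    intro j
    rw [← q_coeff]
    have h1 : τ (q f g) = τ P * C h := by rw [hH, map_mul, hhc]
    have h2 := congrArg (fun z => Polynomial.coeff z j) h1
    simp only [hτq, coeff_neg, coeff_mul_C] at h2
    exact ⟨-((τ P).coeff j), by linear_combination -h2⟩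
  have hHdeg : H.natDegree = 0 := by
    have h1 : H = Polynomial.map C h := by rw [← τ_τ H, hhc, τ_C]
    rw [h1, natDegree_map_eq_of_injective C_injective]
    exact natDegree_eq_zero_of_isUnit hhu
  have hPdeg : P.natDegree = m := by
    have h1 : (q f g).natDegree = P.natDegree + H.natDegree := by
      rw [hH, natDegree_mul hP0 hH0]
    omega
  have hPdeg' : P.natDegree = n := by
    have h1 : (P.map φ).natDegree = P.natDegree := natDegree_map_eq_of_injective hφinj P
    rw [hPmap, natDegree_C_mul hc0, hp'deg] at h1
    exact h1.symm
  have hnm : n = m := by omega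
  -- the conclusion
  have hAint : a ∈ L⟮a⟯ := mem_adjoin_simple_self L a
  have hXA : IsIntegral L⟮a⟯ (RatFunc.X : RatFunc L) := isIntegral_X _ hAint hai
  have hALE : L⟮a⟯ ≤ M₀ := adjoin_simple_le_iff.mpr haM
  have hfinA : FiniteDimensional L⟮a⟯ (RatFunc L) := finiteDimensional_N _ hXA
  have hfrA : Module.finrank L⟮a⟯ (RatFunc L) ≤ m := by
    rw [finrank_N _ hXA]
    apply le_trans (natDegree_le_of_dvd (minpoly.dvd _ _ (aeval_rpoly _ hAint))
      (rpoly_ne_zero _ hAint hai))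
    exact natDegree_rpoly_le _ hAint
  have hfrM : Module.finrank M₀ (RatFunc L) = m := by
    rw [finrank_N M₀ hXint, ← hp, ← hn, hnm]
  refine ⟨a, (eq_of_le_of_finrank_le' hALE ?_).symm⟩
  rw [hfrM]
  exact hfrA

end Luroth

open Polynomial IntermediateField Luroth in
/-- **Lüroth's Theorem.** If `ξ` is transcendental over `L` and `M` is an intermediate
field with `L ⊊ M ⊆ L(ξ)`, then `M = L(η)` for some `η ∈ L(ξ)`. -/
theorem luroth {L F : Type} [Field L] [Field F] [Algebra L F]
    (ξ : F) (hξ : Transcendental L ξ)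
    (M : IntermediateField L F) (hM1 : ⊥ < M)
    (hM2 : M ≤ IntermediateField.adjoin L {ξ}) :
    ∃ η ∈ IntermediateField.adjoin L {ξ}, M = IntermediateField.adjoin L {η} := by
  classical
  have hinj : Function.Injective (Polynomial.aeval ξ : L[X] →ₐ[L] F) := by
    intro x y hxy
    by_contra hne
    apply hξ
    exact ⟨x - y, sub_ne_zero.mpr hne, by simp only [map_sub, hxy, sub_self]⟩
  have hcomap : (nonZeroDivisors L[X]) ≤
      Submonoid.comap (Polynomial.aeval ξ : L[X] →ₐ[L] F) (nonZeroDivisors F) := by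
    intro x hx
    simp only [Submonoid.mem_comap]
    apply mem_nonZeroDivisors_of_ne_zero
    intro h0
    exact nonZeroDivisors.ne_zero hx (hinj (by rw [h0, map_zero]))
  set φ : RatFunc L →ₐ[L] F := RatFunc.liftAlgHom (Polynomial.aeval ξ) hcomap with hφ
  have hφalg : ∀ u : L[X], φ (algebraMap L[X] (RatFunc L) u) = Polynomial.aeval ξ u := by
    intro u
    have h1 : algebraMap L[X] (RatFunc L) u
        = algebraMap L[X] (RatFunc L) u / algebraMap L[X] (RatFunc L) 1 := by simp
    rw [h1, hφ, RatFunc.liftAlgHom_apply_div]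
    simp
  have haev : ∀ u : L[X], Polynomial.aeval ξ u ∈ adjoin L {ξ} := by
    intro u
    have hXi : ξ ∈ adjoin L {ξ} := subset_adjoin L _ rfl
    have h3 := (adjoin L {ξ}).toSubalgebra.aeval_coe ⟨ξ, hXi⟩ u
    simp only at h3
    rw [h3]
    exact SetLike.coe_mem _
  have hrange : φ.fieldRange = adjoin L {ξ} := by
    apply le_antisymm
    · rintro y hy
      obtain ⟨z, rfl⟩ := hy
      show φ z ∈ adjoin L {ξ}
      rw [← RatFunc.num_div_denom z, hφ, RatFunc.liftAlgHom_apply_div]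
      exact div_mem (haev _) (haev _)
    · rw [adjoin_le_iff]
      rintro y rfl
      refine ⟨RatFunc.X, ?_⟩
      show φ RatFunc.X = y
      rw [← RatFunc.algebraMap_X, hφalg]
      simp
  set M₀ : IntermediateField L (RatFunc L) := M.comap φ with hM₀
  have hbot : ⊥ < M₀ := by
    obtain ⟨z, hzM, hz⟩ := SetLike.exists_of_lt hM1
    have hzr : z ∈ φ.fieldRange := hrange ▸ hM2 hzM
    obtain ⟨u, rfl⟩ := hzr
    refine lt_of_le_of_ne bot_le ?_
    intro hEq
    apply hz
    have huM₀ : u ∈ M₀ := hzM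
    rw [← hEq] at huM₀
    obtain ⟨l, rfl⟩ := mem_bot.mp huM₀
    show φ (algebraMap L (RatFunc L) l) ∈ ⊥
    rw [AlgHom.commutes]
    exact IntermediateField.algebraMap_mem ⊥ l
  obtain ⟨η₀, hM₀eq⟩ := luroth_ratfunc M₀ hbot
  refine ⟨φ η₀, hrange ▸ ⟨η₀, rfl⟩, ?_⟩
  have hmc : M₀.map φ = M := by
    apply le_antisymm
    · rintro _ ⟨u, hu, rfl⟩
      exact hu
    · intro z hz
      obtain ⟨u, rfl⟩ : z ∈ φ.fieldRange := hrange ▸ hM2 hz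
      exact ⟨u, hz, rfl⟩
  rw [← hmc, hM₀eq, adjoin_map, Set.image_singleton]
end

section
/- Let X, Y, Z be affine varieties over an algebraically closed field K, and let f : X → Y, g : Y → Z be regular dominant maps. Then the set S_g of points at which g is not proper is contained in S_{g∘f}. -/
open MvPolynomial Set Filter

variable {K : Type} [Field K]

/-- An algebraic (Zariski-closed) subset of `K^m`. -/
def IsAlgSet {m : ℕ} (V : Set (Fin m → K)) : Prop :=
  ∃ S : Set (MvPolynomial (Fin m) K), V = {x | ∀ p ∈ S, eval x p = 0}

/-- The Zariski closure of a subset of `K^m`. -/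
def zclosure {m : ℕ} (A : Set (Fin m → K)) : Set (Fin m → K) :=
  ⋂₀ {V | IsAlgSet V ∧ A ⊆ V}

/-- A map `K^n → K^m` given coordinatewise by polynomials. -/
def IsPolyMap {n m : ℕ} (F : (Fin n → K) → (Fin m → K)) : Prop :=
  ∃ p : Fin m → MvPolynomial (Fin n) K, ∀ x j, F x j = eval x (p j)

/-- The ring of regular (polynomial) functions on a subset `X ⊆ K^n`,
as a subalgebra of all functions `X → K`. -/
noncomputable def coordRing {n : ℕ} (X : Set (Fin n → K)) : Subalgebra K (X → K) :=
  (MvPolynomial.aeval (fun i => (fun x : X => (x : Fin n → K) i)) :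
    MvPolynomial (Fin n) K →ₐ[K] (X → K)).range

/-- The pullback homomorphism on regular functions induced by a map `f : X → Y`. -/
noncomputable def pullback {n m : ℕ} {X : Set (Fin n → K)} {Y : Set (Fin m → K)}
    (f : X → Y) : coordRing Y →+* (X → K) :=
  (Pi.ringHom (fun x : X => Pi.evalRingHom (fun _ : Y => K) (f x))).comp
    ((coordRing Y).subtype)

/-- `f : X → Y` is a finite map if every regular function on `X` is integral over
the pullback of the ring of regular functions on `Y`. -/
def IsFiniteMap {n m : ℕ} {X : Set (Fin n → K)} {Y : Set (Fin m → K)} (f : X → Y) : Prop :=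
  ∀ g ∈ coordRing X, (pullback f).IsIntegralElem g

/-- `F` (mapping `X` into `Y`) is proper at `y`: there is a Zariski-open neighbourhood `U`
of `y` such that the restriction `X ∩ F⁻¹(U) → Y ∩ U` is a finite map. -/
def ProperAt {n m : ℕ} (X : Set (Fin n → K)) (Y : Set (Fin m → K))
    (F : (Fin n → K) → (Fin m → K)) (y : Fin m → K) : Prop :=
  ∃ U : Set (Fin m → K), IsAlgSet Uᶜ ∧ y ∈ U ∧
    ∃ h : Set.MapsTo F (X ∩ F ⁻¹' U) (Y ∩ U),
      IsFiniteMap (Set.MapsTo.restrict F _ _ h)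

/-- The set `S_F` of points of the closure of the image at which `F` is not proper. -/
def NotProperSet {n m : ℕ} (X : Set (Fin n → K)) (Y : Set (Fin m → K))
    (F : (Fin n → K) → (Fin m → K)) : Set (Fin m → K) :=
  {y ∈ zclosure (F '' X) | ¬ ProperAt X Y F y}

/-- `F` restricted to `X` is generically finite: on a nonempty Zariski-open subset
meeting the image, all fibers are finite. -/
def GenericallyFinite {n m : ℕ} (X : Set (Fin n → K))
    (F : (Fin n → K) → (Fin m → K)) : Prop :=
  ∃ U : Set (Fin m → K), IsAlgSet Uᶜ ∧ (U ∩ F '' X).Nonempty ∧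
    ∀ y ∈ U, (X ∩ F ⁻¹' {y}).Finite

/-- An irreducible algebraic subset of `K^m`. -/
def IrredAlgSet {m : ℕ} (X : Set (Fin m → K)) : Prop :=
  IsAlgSet X ∧ X.Nonempty ∧ ∀ V W : Set (Fin m → K), IsAlgSet V → IsAlgSet W →
    X ⊆ V ∪ W → X ⊆ V ∨ X ⊆ W

/-- The dimension of a subset of `K^m`: the supremum of lengths of strictly increasing
chains of irreducible algebraic subsets contained in it. -/
noncomputable def algDim {m : ℕ} (X : Set (Fin m → K)) : ℕ∞ :=
  ⨆ d ∈ {d : ℕ | ∃ c : Fin (d + 1) → Set (Fin m → K),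
    StrictMono c ∧ ∀ i, IrredAlgSet (c i) ∧ c i ⊆ X}, (d : ℕ∞)

/-- Through `x` passes a parametric curve of degree at most `d` contained in `S`. -/
def HasParamCurveThrough {m : ℕ} (S : Set (Fin m → K)) (d : ℕ) (x : Fin m → K) : Prop :=
  ∃ φ : Fin m → Polynomial K,
    (∀ j, (φ j).natDegree ≤ d) ∧ (∃ j, 0 < (φ j).natDegree) ∧
    (∀ t : K, (fun j => (φ j).eval t) ∈ S) ∧ ∃ t₀ : K, (fun j => (φ j).eval t₀) = x

section Aux

variable {K : Type} [Field K]

lemma aeval_eq_eval' {k : ℕ} (y : Fin k → K) (p : MvPolynomial (Fin k) K) :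
    aeval y p = eval y p := by
  rw [aeval_def, eval, ← Algebra.algebraMap_self]; rfl

lemma eval_comp_poly {a b : ℕ} {F : (Fin a → K) → (Fin b → K)}
    {pF : Fin b → MvPolynomial (Fin a) K} (hpF : ∀ x j, F x j = eval x (pF j))
    (x : Fin a → K) (s : MvPolynomial (Fin b) K) :
    eval (F x) s = eval x (aeval pF s) := by
  have hFx : F x = fun j => eval x (pF j) := funext (hpF x)
  rw [hFx, ← aeval_eq_eval' x, ← aeval_eq_eval' (fun j => eval x (pF j)) s,
    comp_aeval_apply]
  simp [aeval_eq_eval']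

lemma subset_zclosure {m : ℕ} (A : Set (Fin m → K)) : A ⊆ zclosure A :=
  fun a ha => Set.mem_sInter.2 fun _ hV => hV.2 ha

lemma zclosure_min {m : ℕ} {A V : Set (Fin m → K)} (hV : IsAlgSet V) (hAV : A ⊆ V) :
    zclosure A ⊆ V :=
  Set.sInter_subset_of_mem ⟨hV, hAV⟩

lemma eval_zclosure {m : ℕ} {A : Set (Fin m → K)} {r : MvPolynomial (Fin m) K}
    (h : ∀ a ∈ A, eval a r = 0) : ∀ y ∈ zclosure A, eval y r = 0 := by
  intro y hy
  have : zclosure A ⊆ {x | ∀ p ∈ ({r} : Set (MvPolynomial (Fin m) K)), eval x p = 0} :=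
    zclosure_min ⟨{r}, rfl⟩ (fun a ha p hp => by rw [Set.mem_singleton_iff.1 hp]; exact h a ha)
  exact this hy r rfl

lemma isAlgSet_zclosure {m : ℕ} (A : Set (Fin m → K)) : IsAlgSet (zclosure A) := by
  refine ⟨{p | ∀ a ∈ A, eval a p = 0}, Set.Subset.antisymm ?_ ?_⟩
  · exact zclosure_min ⟨_, rfl⟩ (fun a ha p hp => hp a ha)
  · intro x hx
    refine Set.mem_sInter.2 fun V hV => ?_
    obtain ⟨⟨T, rfl⟩, hAV⟩ := hV
    exact fun p hp => hx p (fun a ha => hAV ha p hp)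

lemma polyMap_preimage_algSet {a b : ℕ} {F : (Fin a → K) → (Fin b → K)}
    (hF : IsPolyMap F) {V : Set (Fin b → K)} (hV : IsAlgSet V) : IsAlgSet (F ⁻¹' V) := by
  obtain ⟨pF, hpF⟩ := hF
  obtain ⟨S, rfl⟩ := hV
  refine ⟨aeval pF '' S, Set.ext fun x => ?_⟩
  constructor
  · rintro hx _ ⟨s, hs, rfl⟩
    rw [← eval_comp_poly hpF]; exact hx s hs
  · intro hx s hs
    rw [eval_comp_poly hpF]; exact hx _ ⟨s, hs, rfl⟩

lemma mem_coordRing_iff {a : ℕ} {X : Set (Fin a → K)} {g : X → K} :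
    g ∈ coordRing X ↔ ∃ q : MvPolynomial (Fin a) K, ∀ x : X, g x = eval (x : Fin a → K) q := by
  constructor
  · rintro ⟨q, rfl⟩
    refine ⟨q, fun x => ?_⟩
    have hx := comp_aeval_apply (f := fun i => (fun y : X => (y : Fin a → K) i))
      (Pi.evalAlgHom K (fun _ : X => K) x) q
    simpa [aeval_eq_eval'] using hx
  · rintro ⟨q, hq⟩
    refine ⟨q, funext fun x => ?_⟩
    have hx := comp_aeval_apply (f := fun i => (fun y : X => (y : Fin a → K) i))
      (Pi.evalAlgHom K (fun _ : X => K) x) q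
    simp only [aeval_eq_eval'] at hx
    exact hx.trans (hq x).symm

end Aux

/-- For regular dominant maps `f : X → Y` and `g : Y → Z` of affine varieties,
the non-properness set of `g` is contained in that of `g ∘ f`. -/
theorem notProperSet_comp_subset [IsAlgClosed K] {n m l : ℕ}
    {X : Set (Fin n → K)} {Y : Set (Fin m → K)} {Z : Set (Fin l → K)}
    (hX : IsAlgSet X) (hY : IsAlgSet Y) (hZ : IsAlgSet Z)
    {F : (Fin n → K) → (Fin m → K)} {G : (Fin m → K) → (Fin l → K)}
    (hFp : IsPolyMap F) (hGp : IsPolyMap G)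
    (hF : Set.MapsTo F X Y) (hG : Set.MapsTo G Y Z)
    (hFdom : Y ⊆ zclosure (F '' X)) (hGdom : Z ⊆ zclosure (G '' Y)) :
    NotProperSet Y Z G ⊆ NotProperSet X Z (G ∘ F) := by
  obtain ⟨pF, hpF⟩ := hFp
  obtain ⟨pG, hpG⟩ := hGp
  rintro z ⟨hz1, hz2⟩
  have himg : z ∈ zclosure ((G ∘ F) '' X) := by
    refine zclosure_min (isAlgSet_zclosure _) ?_ hz1
    rintro _ ⟨y, hyY, rfl⟩
    have hsub : F '' X ⊆ G ⁻¹' zclosure ((G ∘ F) '' X) := by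
      rintro _ ⟨x, hx, rfl⟩
      exact subset_zclosure _ ⟨x, hx, rfl⟩
    exact zclosure_min (polyMap_preimage_algSet ⟨pG, hpG⟩ (isAlgSet_zclosure _)) hsub
      (hFdom hyY)
  refine ⟨himg, fun hP => hz2 ?_⟩
  obtain ⟨U, hUc, hzU, hm, hfin⟩ := hP
  obtain ⟨S, hS⟩ := hUc
  refine ⟨U, ⟨S, hS⟩, hzU, fun y hy => ⟨hG hy.1, hy.2⟩, ?_⟩
  intro h hh
  set hm' : Set.MapsTo G (Y ∩ G ⁻¹' U) (Z ∩ U) := fun y hy => ⟨hG hy.1, hy.2⟩ with hm'def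
  obtain ⟨q, hq⟩ := mem_coordRing_iff.mp hh
  -- the restricted map f' between the two open pieces
  set f' : ↥(X ∩ (G ∘ F) ⁻¹' U) → ↥(Y ∩ G ⁻¹' U) :=
    fun x => ⟨F (x : Fin n → K), hF x.2.1, x.2.2⟩ with hf'def
  -- h pulled back along f' is a regular function
  have hhf : (h ∘ f') ∈ coordRing (X ∩ (G ∘ F) ⁻¹' U) := by
    refine mem_coordRing_iff.mpr ⟨aeval pF q, fun x => ?_⟩
    show h (f' x) = _
    rw [hq (f' x), ← eval_comp_poly hpF]
  obtain ⟨P, hPmonic, hPeval⟩ := hfin (h ∘ f') hhf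
  refine ⟨P, hPmonic, ?_⟩
  -- the composition ring hom from Y-piece functions to X-piece functions
  set φ : (↥(Y ∩ G ⁻¹' U) → K) →+* (↥(X ∩ (G ∘ F) ⁻¹' U) → K) :=
    Pi.ringHom (fun x => Pi.evalRingHom (fun _ => K) (f' x)) with hφdef
  have hcomp : φ.comp (pullback (Set.MapsTo.restrict G _ _ hm'))
      = pullback (Set.MapsTo.restrict (G ∘ F) _ _ hm) := by
    refine RingHom.ext fun c => funext fun x => ?_
    show (c : ↥(Z ∩ U) → K) (Set.MapsTo.restrict G _ _ hm' (f' x))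
      = (c : ↥(Z ∩ U) → K) (Set.MapsTo.restrict (G ∘ F) _ _ hm x)
    congr 1
  -- the key vanishing function q' on the Y-piece
  set q' : ↥(Y ∩ G ⁻¹' U) → K :=
    Polynomial.eval₂ (pullback (Set.MapsTo.restrict G _ _ hm')) h P with hq'def
  have hφq' : φ q' = 0 := by
    rw [hq'def, Polynomial.hom_eval₂, hcomp]
    exact hPeval
  -- q' is a regular function on the Y-piece
  have hq'mem : q' ∈ coordRing (Y ∩ G ⁻¹' U) := by
    have hmemb : ∀ c : coordRing (Z ∩ U),
        pullback (Set.MapsTo.restrict G _ _ hm') c ∈ (coordRing (Y ∩ G ⁻¹' U)).toSubring := by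
      intro c
      obtain ⟨rc, hrc⟩ := mem_coordRing_iff.mp c.2
      refine mem_coordRing_iff.mpr ⟨aeval pG rc, fun y => ?_⟩
      show (c : ↥(Z ∩ U) → K) (Set.MapsTo.restrict G _ _ hm' y) = _
      rw [hrc, ← eval_comp_poly hpG]
      rfl
    set ψ : coordRing (Z ∩ U) →+* (coordRing (Y ∩ G ⁻¹' U)).toSubring :=
      (pullback (Set.MapsTo.restrict G _ _ hm')).codRestrict _ hmemb with hψdef
    have : q' = ((coordRing (Y ∩ G ⁻¹' U)).toSubring.subtype)
        (Polynomial.eval₂ ψ ⟨h, hh⟩ P) := by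
      rw [Polynomial.hom_eval₂]
      rfl
    rw [this]
    exact (Polynomial.eval₂ ψ ⟨h, hh⟩ P).2
  obtain ⟨r, hr⟩ := mem_coordRing_iff.mp hq'mem
  -- q' vanishes on the image of f'
  have hvan : ∀ x : ↥(X ∩ (G ∘ F) ⁻¹' U), q' (f' x) = 0 := fun x => congrFun hφq' x
  -- density: r vanishes on the whole Y-piece
  have hrzero : ∀ y : ↥(Y ∩ G ⁻¹' U), eval (y : Fin m → K) r = 0 := by
    rintro ⟨y0, hy0Y, hy0U⟩
    have hGy0 : G y0 ∈ U := hy0U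
    have hex : ∃ s ∈ S, eval (G y0) s ≠ 0 := by
      by_contra hall
      push_neg at hall
      have hmem : G y0 ∈ Uᶜ := by rw [hS]; exact fun p hp => hall p hp
      exact hmem hGy0
    obtain ⟨s, hsS, hsne⟩ := hex
    have hprod : ∀ w ∈ F '' X, eval w (r * aeval pG s) = 0 := by
      rintro _ ⟨x, hx, rfl⟩
      by_cases hxu : G (F x) ∈ U
      · have hxmem : x ∈ X ∩ (G ∘ F) ⁻¹' U := ⟨hx, hxu⟩
        have := hvan ⟨x, hxmem⟩
        rw [hr] at this
        simp only [map_mul]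
        exact mul_eq_zero_of_left this _
      · have hxc : G (F x) ∈ Uᶜ := hxu
        rw [hS] at hxc
        have : eval (F x) (aeval pG s) = 0 := by
          rw [← eval_comp_poly hpG]
          exact hxc s hsS
        simp only [map_mul]
        exact mul_eq_zero_of_right _ this
    have hy0cl := eval_zclosure hprod y0 (hFdom hy0Y)
    rw [map_mul] at hy0cl
    have : eval y0 (aeval pG s) ≠ 0 := by
      rw [← eval_comp_poly hpG]
      exact hsne
    exact (mul_eq_zero.mp hy0cl).resolve_right this
  have : q' = 0 := by
    funext y
    exact (hr y).trans (hrzero y)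
  rw [hq'def] at this
  exact this
end

section
/- Let X ⊂ K^n be a hypersurface of degree d < n over an algebraically closed field K. Then through every point of X there passes an affine line entirely contained in X; in particular the degree of K-uniruledness of X is one. -/
open MvPolynomial Set Filter

variable {K : Type} [Field K]

section Aux

lemma mydeg_eq_sum {n : ℕ} (σ : Fin n →₀ ℕ) : σ.degree = ∑ i, σ i :=
  Finset.sum_subset (Finset.subset_univ _) (fun i _ h => Finsupp.notMem_support_iff.1 h)

lemma hc_mul_homog {n : ℕ} {g : MvPolynomial (Fin n) K} {e : ℕ} (hg : g.IsHomogeneous e)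
    (h : MvPolynomial (Fin n) K) (m : ℕ) (hem : e ≤ m) :
    homogeneousComponent m (h * g) = homogeneousComponent (m - e) h * g := by
  obtain ⟨s, c, rfl⟩ : ∃ (s : Finset (Fin n →₀ ℕ)) (c : (Fin n →₀ ℕ) → K),
      h = ∑ τ ∈ s, monomial τ (c τ) := ⟨h.support, fun τ => coeff τ h, h.as_sum⟩
  rw [Finset.sum_mul, map_sum, map_sum, Finset.sum_mul]
  refine Finset.sum_congr rfl fun τ _ => ?_
  have h1 : (monomial τ (c τ) * g).IsHomogeneous (τ.degree + e) :=
    (isHomogeneous_monomial _ rfl).mul hg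
  rw [homogeneousComponent_of_mem h1,
      homogeneousComponent_of_mem (isHomogeneous_monomial (c τ) rfl)]
  by_cases hm : m - e = τ.degree
  · have : m = τ.degree + e := by omega
    simp [hm, this]
  · have : ¬ m = τ.degree + e := by omega
    simp [hm, this]

lemma hc_mul_homog_zero {n : ℕ} {g : MvPolynomial (Fin n) K} {e : ℕ} (hg : g.IsHomogeneous e)
    (h : MvPolynomial (Fin n) K) (m : ℕ) (hem : m < e) :
    homogeneousComponent m (h * g) = 0 := by
  obtain ⟨s, c, rfl⟩ : ∃ (s : Finset (Fin n →₀ ℕ)) (c : (Fin n →₀ ℕ) → K),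
      h = ∑ τ ∈ s, monomial τ (c τ) := ⟨h.support, fun τ => coeff τ h, h.as_sum⟩
  rw [Finset.sum_mul, map_sum]
  refine Finset.sum_eq_zero fun τ _ => ?_
  have h1 : (monomial τ (c τ) * g).IsHomogeneous (τ.degree + e) :=
    (isHomogeneous_monomial _ rfl).mul hg
  rw [homogeneousComponent_of_mem h1, if_neg (by omega)]

/-- the graded spanning set -/
def Tset {n d : ℕ} (g : Fin d → MvPolynomial (Fin n) K) (e : Fin d → ℕ) (M m : ℕ) :
    Set (MvPolynomial (Fin n) K) :=
  {z | ∃ (a : Fin d → ℕ) (w : Fin n →₀ ℕ),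
      (∑ k, a k * e k) + w.degree = m ∧ w.degree < M ∧
      z = (∏ k, g k ^ a k) * monomial w 1}

lemma span_claim {n d : ℕ} {e : Fin d → ℕ} (he : ∀ k, 0 < e k)
    {g : Fin d → MvPolynomial (Fin n) K} (hg : ∀ k, (g k).IsHomogeneous (e k))
    {N : ℕ} (hXN : ∀ i, X i ^ N ∈ Ideal.span (Set.range g)) {M : ℕ} (hM : M = n * N + 1) :
    ∀ m (p : MvPolynomial (Fin n) K), p.IsHomogeneous m →
      p ∈ Submodule.span K (Tset g e M m) := by
  intro m
  induction m using Nat.strong_induction_on with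
  | _ m IH =>
  suffices hmono : ∀ σ : Fin n →₀ ℕ, σ.degree = m →
      monomial σ (1 : K) ∈ Submodule.span K (Tset g e M m) by
    intro p hp
    rw [p.as_sum]
    refine Submodule.sum_mem _ fun σ hσ => ?_
    have hdeg : σ.degree = m := by
      by_contra hne
      exact (mem_support_iff.1 hσ) (hp.coeff_eq_zero (by rwa [Finsupp.degree] at hne))
    have : monomial σ (coeff σ p) = (coeff σ p) • monomial σ (1 : K) := by
      rw [smul_monomial, smul_eq_mul, mul_one]
    rw [this]
    exact Submodule.smul_mem _ _ (hmono σ hdeg)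
  intro σ hσ
  by_cases hm : m < M
  · refine Submodule.subset_span ⟨0, σ, by simp [hσ], hσ ▸ hm, ?_⟩
    simp
  push_neg at hm
  -- find a coordinate with large exponent
  have hex : ∃ i, N ≤ σ i := by
    by_contra hno
    push_neg at hno
    have h1 : σ.degree ≤ n * N := by
      rw [mydeg_eq_sum]
      calc ∑ i, σ i ≤ ∑ _i : Fin n, N := Finset.sum_le_sum fun i _ => (hno i).le
        _ = n * N := by simp [Finset.sum_const, mul_comm]
    omega
  obtain ⟨i, hi⟩ := hex
  set σ' := σ - Finsupp.single i N with hσ'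
  have hadd : σ' + Finsupp.single i N = σ := by
    ext j
    simp only [Finsupp.add_apply, hσ', Finsupp.tsub_apply, Finsupp.single_apply]
    by_cases hji : i = j
    · subst hji; simp; omega
    · simp [hji]
  obtain ⟨c, hc⟩ := (Ideal.mem_span_range_iff_exists_fun).mp (hXN i)
  have hmono_eq : monomial σ (1 : K) = ∑ k, (monomial σ' 1 * c k) * g k := by
    calc monomial σ (1 : K) = monomial σ' 1 * X i ^ N := by
          rw [X_pow_eq_monomial, monomial_mul, hadd, mul_one]
      _ = monomial σ' 1 * ∑ k, c k * g k := by rw [hc]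
      _ = ∑ k, (monomial σ' 1 * c k) * g k := by
          rw [Finset.mul_sum]; exact Finset.sum_congr rfl fun k _ => by ring
  have hcomp : monomial σ (1 : K)
      = ∑ k, homogeneousComponent m ((monomial σ' 1 * c k) * g k) := by
    conv_lhs => rw [← (homogeneousComponent_of_mem
      (isHomogeneous_monomial (1 : K) hσ)).trans (if_pos rfl), hmono_eq]
    rw [map_sum]
  rw [hcomp]
  refine Submodule.sum_mem _ fun k _ => ?_
  by_cases hek : e k ≤ m
  · rw [hc_mul_homog (hg k) _ m hek]
    have hh' : (homogeneousComponent (m - e k) (monomial σ' 1 * c k)).IsHomogeneous (m - e k) :=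
      homogeneousComponent_isHomogeneous _ _
    have hmem := IH (m - e k) (by have := he k; omega) _ hh'
    -- multiply by g k
    have hmul : ∀ z ∈ Submodule.span K (Tset g e M (m - e k)),
        z * g k ∈ Submodule.span K (Tset g e M m) := by
      intro z hz
      have : z * g k = (LinearMap.mulRight K (g k)) z := rfl
      rw [this]
      have hle : (Submodule.span K (Tset g e M (m - e k))).map (LinearMap.mulRight K (g k))
          ≤ Submodule.span K (Tset g e M m) := by
        rw [Submodule.map_span, Submodule.span_le]
        rintro _ ⟨z', ⟨a, w, hsum, hw, rfl⟩, rfl⟩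
        refine Submodule.subset_span
          ⟨(fun j => a j + (if j = k then 1 else 0)), w, ?_, hw, ?_⟩
        · have h2 : ∑ j, (a j + (if j = k then 1 else 0)) * e j
              = (∑ j, a j * e j) + e k := by
            simp only [add_mul, Finset.sum_add_distrib]
            congr 1
            have hstep : ∑ j : Fin d, (if j = k then 1 else 0) * e j
                = ∑ j : Fin d, (if j = k then e j else 0) :=
              Finset.sum_congr rfl (fun j _ => by split <;> simp)
            rw [hstep, Finset.sum_ite_eq' _ k e]
            simp
          rw [h2]; omega
        · have h3 : (∏ j, g j ^ (a j + (if j = k then 1 else 0)))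
              = (∏ j, g j ^ a j) * g k := by
            simp only [pow_add, Finset.prod_mul_distrib]
            congr 1
            have hstep : ∏ j : Fin d, g j ^ (if j = k then 1 else 0)
                = ∏ j : Fin d, (if j = k then g j else 1) :=
              Finset.prod_congr rfl (fun j _ => by split <;> simp)
            rw [hstep, Finset.prod_ite_eq' _ k g]
            simp
          rw [h3, LinearMap.mulRight_apply]
          ring
      exact hle (Submodule.mem_map_of_mem hz)
    exact hmul _ hmem
  · rw [hc_mul_homog_zero (hg k) _ m (by omega)]
    exact Submodule.zero_mem _



lemma card_le_of_span {K V : Type*} [Field K] [AddCommGroup V] [Module K V]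
    {ι J : Type*} [Fintype ι] [Fintype J]
    {v : ι → V} (hv : LinearIndependent K v) (φ : J → V)
    (hsub : ∀ i, v i ∈ Submodule.span K (Set.range φ)) :
    Fintype.card ι ≤ Fintype.card J := by
  classical
  have : FiniteDimensional K (Submodule.span K (Set.range φ)) :=
    FiniteDimensional.span_of_finite K (Set.finite_range φ)
  let v' : ι → Submodule.span K (Set.range φ) := fun i => ⟨v i, hsub i⟩
  have hv' : LinearIndependent K v' :=
    LinearIndependent.of_comp (Submodule.span K (Set.range φ)).subtype hv
  exact (hv'.fintype_card_le_finrank).trans (finrank_range_le_card φ)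



lemma arith_bound (n d M : ℕ) (hdn : d < n) (hM : 0 < M) :
    (n * (n ^ d * M ^ n) + 1) ^ d * M ^ n < (n ^ d * M ^ n + 1) ^ n := by
  set B := n ^ d * M ^ n with hB
  have hn : 0 < n := lt_of_le_of_lt (Nat.zero_le d) hdn
  have h1 : n * B + 1 ≤ n * (B + 1) := by nlinarith
  calc (n * B + 1) ^ d * M ^ n ≤ (n * (B + 1)) ^ d * M ^ n :=
        Nat.mul_le_mul_right _ (Nat.pow_le_pow_left h1 d)
    _ = (B + 1) ^ d * (n ^ d * M ^ n) := by rw [mul_pow]; ring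
    _ = (B + 1) ^ d * B := by rw [hB]
    _ < (B + 1) ^ d * (B + 1) := by
        exact Nat.mul_lt_mul_of_le_of_lt (le_refl _) (Nat.lt_succ_self B)
          (pow_pos (Nat.succ_pos B) d)
    _ = (B + 1) ^ (d + 1) := by rw [pow_succ]
    _ ≤ (B + 1) ^ n := Nat.pow_le_pow_right (Nat.succ_le_succ (Nat.zero_le B)) hdn

lemma key_common_zero {K : Type} [Field K] [IsAlgClosed K] {n d : ℕ} (hdn : d < n)
    {e : Fin d → ℕ} (he : ∀ k, 0 < e k)
    {g : Fin d → MvPolynomial (Fin n) K} (hg : ∀ k, (g k).IsHomogeneous (e k)) :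
    ∃ v : Fin n → K, v ≠ 0 ∧ ∀ k, eval v (g k) = 0 := by
  classical
  by_contra hcon
  push_neg at hcon
  have hz : ∀ v : Fin n → K, (∀ k, eval v (g k) = 0) → v = 0 := fun v hv => by
    by_contra hv0
    obtain ⟨k, hk⟩ := hcon v hv0
    exact hk (hv k)
  have hXrad : ∀ i, (X i : MvPolynomial (Fin n) K) ∈ (Ideal.span (Set.range g)).radical := by
    intro i
    rw [← vanishingIdeal_zeroLocus_eq_radical (K := K)]
    refine mem_vanishingIdeal_iff.mpr fun x hx => ?_
    have hx0 : x = 0 := hz x fun k => (mem_zeroLocus_iff.mp hx) (g k) (Ideal.subset_span ⟨k, rfl⟩)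
    rw [hx0]
    simp
  choose f hf using fun i => Ideal.mem_radical_iff.mp (hXrad i)
  set N : ℕ := (Finset.univ.sup f) + 1 with hN
  have hXN : ∀ i, (X i : MvPolynomial (Fin n) K) ^ N ∈ Ideal.span (Set.range g) := fun i =>
    Ideal.pow_mem_of_pow_mem _ (hf i) (by
      have : f i ≤ Finset.univ.sup f := Finset.le_sup (Finset.mem_univ i)
      omega)
  set M : ℕ := n * N + 1 with hMdef
  have hM : 0 < M := by omega
  set B : ℕ := n ^ d * M ^ n with hB
  set m : ℕ := n * B with hm
  set emb : (Fin n → Fin (B + 1)) → (Fin n →₀ ℕ) :=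
    fun σ => Finsupp.equivFunOnFinite.symm (fun i => (σ i : ℕ)) with hemb
  have hembinj : Function.Injective emb := by
    intro a b hab
    funext i
    have h := congrArg (fun (s : Fin n →₀ ℕ) => s i) hab
    simp only [hemb, Finsupp.coe_equivFunOnFinite_symm] at h
    exact Fin.ext h
  set v : (Fin n → Fin (B + 1)) → MvPolynomial (Fin n) K :=
    fun σ => monomial (emb σ) 1 with hv
  have hvli : LinearIndependent K v := by
    have h2 := (basisMonomials (Fin n) K).linearIndependent.comp emb hembinj
    have hveq : v = (basisMonomials (Fin n) K) ∘ emb := by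
      funext σ
      simp [hv, coe_basisMonomials]
    rwa [hveq]
  set φ : ((Fin d → Fin (m + 1)) × (Fin n → Fin M)) → MvPolynomial (Fin n) K :=
    fun aw => (∏ k, g k ^ (aw.1 k : ℕ)) *
      monomial (Finsupp.equivFunOnFinite.symm fun i => (aw.2 i : ℕ)) 1 with hφ
  have hsub : ∀ σ, v σ ∈ Submodule.span K (Set.range φ) := by
    intro σ
    have hspan := span_claim he hg hXN hMdef ((emb σ).degree) (monomial (emb σ) 1)
      (isHomogeneous_monomial 1 rfl)
    have hTsub : Tset g e M ((emb σ).degree) ⊆ Set.range φ := by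
      rintro z ⟨a, w, hsum, hw, rfl⟩
      have hdeg : (emb σ).degree ≤ m := by
        rw [mydeg_eq_sum]
        calc ∑ i, (emb σ) i ≤ ∑ _i : Fin n, B := Finset.sum_le_sum fun i _ => by
              simp only [hemb, Finsupp.coe_equivFunOnFinite_symm]
              exact Nat.lt_succ_iff.mp (σ i).isLt
          _ = n * B := by simp [mul_comm]
      have ha : ∀ k, a k < m + 1 := by
        intro k
        have h1 : a k * e k ≤ ∑ j, a j * e j :=
          Finset.single_le_sum (f := fun j => a j * e j) (fun j _ => Nat.zero_le _) (Finset.mem_univ k)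
        have h2 : a k ≤ a k * e k := Nat.le_mul_of_pos_right _ (he k)
        omega
      have hwlt : ∀ i, w i < M := fun i => lt_of_le_of_lt (Finsupp.le_degree i w) hw
      refine ⟨(fun k => ⟨a k, ha k⟩, fun i => ⟨w i, hwlt i⟩), ?_⟩
      simp only [hφ]
      congr 1
      exact congrArg (fun s => monomial s (1 : K)) (Finsupp.equivFunOnFinite_symm_coe w)
    exact Submodule.span_mono hTsub hspan
  have hcard := card_le_of_span hvli φ hsub
  rw [Fintype.card_fun, Fintype.card_prod, Fintype.card_fun, Fintype.card_fun] at hcard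
  simp only [Fintype.card_fin] at hcard
  have harith : (m + 1) ^ d * M ^ n < (B + 1) ^ n := by
    rw [hm, hB]
    exact arith_bound n d M hdn hM
  omega



lemma eval_smul_homog {n : ℕ} {p : MvPolynomial (Fin n) K} {k : ℕ} (hp : p.IsHomogeneous k)
    (t : K) (v : Fin n → K) : eval (t • v) p = t ^ k * eval v p := by
  conv_lhs => rw [p.as_sum]
  conv_rhs => rw [p.as_sum]
  rw [map_sum, map_sum, Finset.mul_sum]
  refine Finset.sum_congr rfl fun σ hσ => ?_
  have hdeg : ∑ i ∈ σ.support, σ i = k := by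
    by_contra hne
    exact (mem_support_iff.1 hσ) (hp.coeff_eq_zero hne)
  rw [eval_monomial, eval_monomial]
  simp only [Finsupp.prod, Pi.smul_apply, smul_eq_mul, mul_pow, Finset.prod_mul_distrib,
    Finset.prod_pow_eq_pow_sum, hdeg]
  ring

lemma totalDegree_shift_le {n : ℕ} (p : MvPolynomial (Fin n) K) (x : Fin n → K) :
    (aeval (fun i => X i + C (x i)) p).totalDegree ≤ p.totalDegree := by
  conv_lhs => rw [p.as_sum]
  rw [map_sum]
  refine (totalDegree_finset_sum _ _).trans (Finset.sup_le fun σ hσ => ?_)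
  rw [aeval_monomial]
  refine (totalDegree_mul _ _).trans ?_
  have h1 : (algebraMap K (MvPolynomial (Fin n) K) (coeff σ p)).totalDegree = 0 :=
    totalDegree_C _
  rw [h1, zero_add]
  refine (totalDegree_finset_prod _ _).trans ?_
  refine le_trans ?_ (le_totalDegree hσ)
  have : ∀ i ∈ σ.support, ((X i + C (x i) : MvPolynomial (Fin n) K) ^ σ i).totalDegree ≤ σ i := by
    intro i _
    refine (totalDegree_pow _ _).trans ?_
    have h2 : (X i + C (x i) : MvPolynomial (Fin n) K).totalDegree ≤ 1 := by
      refine (totalDegree_add _ _).trans ?_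
      simp [totalDegree_X, totalDegree_C]
    calc σ i * (X i + C (x i) : MvPolynomial (Fin n) K).totalDegree ≤ σ i * 1 :=
          Nat.mul_le_mul_left _ h2
      _ = σ i := Nat.mul_one _
  exact le_trans (Finset.sum_le_sum this) (le_of_eq rfl)

theorem hypersurface_covered_by_lines' {K : Type} [Field K] [IsAlgClosed K] {n d : ℕ}
    (p : MvPolynomial (Fin n) K) (hp0 : p ≠ 0) (hpd : p.totalDegree = d) (hdn : d < n)
    {x : Fin n → K} (hx : eval x p = 0) :
    ∃ v : Fin n → K, v ≠ 0 ∧ ∀ t : K, eval (x + t • v) p = 0 := by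
  classical
  set q := aeval (fun i => X i + C (x i)) p with hq
  have hqdeg : q.totalDegree ≤ d := hpd ▸ totalDegree_shift_le p x
  have hqeval : ∀ y : Fin n → K, eval y q = eval (x + y) p := by
    intro y
    rw [hq, map_aeval]
    have h0 : (eval y).comp (algebraMap K (MvPolynomial (Fin n) K)) = RingHom.id K := by
      ext c; simp
    rw [h0]
    have h1 : (fun i => eval y (X i + C (x i))) = (x + y) := by
      funext i; simp [add_comm]
    rw [h1]
    rfl
  set g : Fin d → MvPolynomial (Fin n) K :=
    fun k => homogeneousComponent ((k : ℕ) + 1) q with hgdef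
  obtain ⟨v, hv0, hgv⟩ := key_common_zero (K := K) hdn (e := fun k => (k : ℕ) + 1)
    (fun k => Nat.succ_pos _) (g := g) (fun k => homogeneousComponent_isHomogeneous _ q)
  refine ⟨v, hv0, fun t => ?_⟩
  rw [← hqeval (t • v)]
  conv_lhs => rw [← sum_homogeneousComponent q]
  rw [map_sum]
  refine Finset.sum_eq_zero fun j hj => ?_
  rw [eval_smul_homog (homogeneousComponent_isHomogeneous j q) t v]
  rcases Nat.eq_zero_or_pos j with h0 | hpos
  · subst h0
    rw [homogeneousComponent_zero]
    have hc0 : coeff 0 q = 0 := by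
      have h2 := hqeval 0
      rw [add_zero, hx] at h2
      rw [eval_zero] at h2
      have h3 : coeff 0 q = constantCoeff q := (congrFun constantCoeff_eq q).symm
      rw [h3, h2]
    simp [hc0]
  · have hjd : j - 1 < d := by
      have hj' := Finset.mem_range.mp hj
      omega
    have hval : ((⟨j - 1, hjd⟩ : Fin d) : ℕ) + 1 = j := by
      simp only [Fin.val_mk]
      omega
    have hgj : homogeneousComponent j q = g ⟨j - 1, hjd⟩ := by
      simp only [hgdef]
      rw [hval]
    rw [hgj, hgv ⟨j - 1, hjd⟩, mul_zero]

end Aux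

/-- A hypersurface in `K^n` of degree `d < n` over an algebraically closed field is
covered by affine lines: through every point of it passes a line contained in it.
In particular its degree of `K`-uniruledness is one. -/
theorem hypersurface_covered_by_lines [IsAlgClosed K] {n d : ℕ}
    (p : MvPolynomial (Fin n) K) (hp0 : p ≠ 0) (hpd : p.totalDegree = d) (hdn : d < n)
    {x : Fin n → K} (hx : eval x p = 0) :
    ∃ v : Fin n → K, v ≠ 0 ∧ ∀ t : K, eval (x + t • v) p = 0 :=
  hypersurface_covered_by_lines' p hp0 hpd hdn hx
end

section
/- Let K ⊆ L be an extension of algebraically closed fields and f₁,…,f_r ∈ K[x₁,…,x_m]. Let KX and LX be the zero sets of f₁,…,f_r in K^m and L^m respectively. Then KX is Zariski-dense in LX; more precisely, any g ∈ L[x₁,…,x_m] vanishing identically on KX vanishes identically on LX. -/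
open MvPolynomial Set Filter

variable {K : Type} [Field K]

noncomputable def gbAux {L : Type} [Field L] [Algebra K L] {m : ℕ}
    (g : MvPolynomial (Fin m) L) (b : Module.Basis.ofVectorSpaceIndex K L) : MvPolynomial (Fin m) K :=
  AddMonoidAlgebra.ofCoeff
    (Finsupp.mapRange (fun c => (Module.Basis.ofVectorSpace K L).repr c b) (by simp)
      (AddMonoidAlgebra.coeff g))

theorem gbAux_coeff {L : Type} [Field L] [Algebra K L] {m : ℕ}
    (g : MvPolynomial (Fin m) L) (b : Module.Basis.ofVectorSpaceIndex K L) (α : Fin m →₀ ℕ) :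
    coeff α (gbAux g b) = (Module.Basis.ofVectorSpace K L).repr (coeff α g) b := by
  simp [gbAux, coeff, Finsupp.mapRange_apply]

theorem gbAux_eval {L : Type} [Field L] [Algebra K L] {m : ℕ}
    (g : MvPolynomial (Fin m) L) (b : Module.Basis.ofVectorSpaceIndex K L) (x : Fin m → K) :
    eval x (gbAux g b) =
      (Module.Basis.ofVectorSpace K L).repr (eval (fun j => algebraMap K L (x j)) g) b := by
  set B := Module.Basis.ofVectorSpace K L
  have h1 : eval x (gbAux g b) = ∑ α ∈ g.support, coeff α (gbAux g b) * ∏ j, x j ^ α j := by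
    rw [eval_eq']
    refine Finset.sum_subset (by exact Finsupp.support_mapRange (hf := by simp)) ?_
    intro α _ hα
    rw [notMem_support_iff.1 hα, zero_mul]
  rw [h1, eval_eq', map_sum, Finsupp.finset_sum_apply]
  refine Finset.sum_congr rfl ?_
  intro α _
  rw [gbAux_coeff]
  have : (∏ j, (algebraMap K L) (x j) ^ α j) = algebraMap K L (∏ j, x j ^ α j) := by
    rw [map_prod]; simp [map_pow]
  rw [this, mul_comm (coeff α g), ← Algebra.smul_def, map_smul, Finsupp.smul_apply, smul_eq_mul, mul_comm]

/-- Let `K ⊆ L` be an extension of algebraically closed fields and `f i` polynomials over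
`K`. Then the `K`-points of their zero set are Zariski-dense in the `L`-points: any
polynomial `g` over `L` vanishing on `KX` vanishes on `LX`. -/
theorem kpoints_dense {L : Type} [Field L] [Algebra K L] [IsAlgClosed K] [IsAlgClosed L]
    {m r : ℕ} (f : Fin r → MvPolynomial (Fin m) K) (g : MvPolynomial (Fin m) L)
    (hg : ∀ x : Fin m → K, (∀ i, eval x (f i) = 0) →
      eval (fun j => algebraMap K L (x j)) g = 0) :
    ∀ x : Fin m → L, (∀ i, eval x (MvPolynomial.map (algebraMap K L) (f i)) = 0) →
      eval x g = 0 := by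
  classical
  intro x hx
  set B := Module.Basis.ofVectorSpace K L with hB
  set I : Ideal (MvPolynomial (Fin m) K) := Ideal.span (Set.range f) with hI
  -- each slice is in the radical of I, by the Nullstellensatz over K
  have hrad : ∀ b, gbAux g b ∈ I.radical := by
    intro b
    rw [← vanishingIdeal_zeroLocus_eq_radical (K := K), mem_vanishingIdeal_iff]
    intro y hy
    have hy' : ∀ i, eval y (f i) = 0 := fun i =>
      (mem_zeroLocus_iff).1 hy (f i) (Ideal.subset_span ⟨i, rfl⟩)
    show eval y (gbAux g b) = 0
    rw [gbAux_eval, hg y hy', map_zero, Finsupp.coe_zero, Pi.zero_apply]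
  -- each mapped slice vanishes at x
  have hval : ∀ b, eval x (MvPolynomial.map (algebraMap K L) (gbAux g b)) = 0 := by
    intro b
    obtain ⟨n, hn⟩ := hrad b
    have h2 : (MvPolynomial.map (algebraMap K L)) (gbAux g b ^ n) ∈
        Ideal.map (MvPolynomial.map (algebraMap K L)) I := Ideal.mem_map_of_mem _ hn
    have h3 : Ideal.map (MvPolynomial.map (algebraMap K L)) I ≤
        RingHom.ker (MvPolynomial.eval x) := by
      rw [hI, Ideal.map_span, Ideal.span_le]
      rintro q ⟨p, ⟨i, rfl⟩, rfl⟩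
      exact hx i
    have h4 := h3 h2
    rw [RingHom.mem_ker, map_pow, map_pow] at h4
    rcases Nat.eq_zero_or_pos n with hn0 | hn0
    · subst hn0; simp at h4
    · exact pow_eq_zero_iff hn0.ne' |>.1 h4
  -- assemble g from its slices
  let T : Finset (Module.Basis.ofVectorSpaceIndex K L) :=
    g.support.biUnion (fun α => (B.repr (coeff α g)).support)
  have hdecomp : g = ∑ b ∈ T, (b : L) • MvPolynomial.map (algebraMap K L) (gbAux g b) := by
    apply MvPolynomial.ext
    intro α
    rw [MvPolynomial.coeff_sum]
    have hsub : (B.repr (coeff α g)).support ⊆ T := by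
      by_cases hα : α ∈ g.support
      · exact fun b hb => Finset.mem_biUnion.2 ⟨α, hα, hb⟩
      · rw [notMem_support_iff.1 hα]; simp
    calc coeff α g = (B.repr (coeff α g)).sum (fun b c => c • (B b)) := by
          rw [← Finsupp.linearCombination_apply, B.linearCombination_repr]
      _ = ∑ b ∈ T, (B.repr (coeff α g)) b • (B b) := by
          rw [Finsupp.sum]
          refine Finset.sum_subset hsub ?_
          intro b _ hb
          rw [Finsupp.notMem_support_iff.1 hb, zero_smul]
      _ = ∑ b ∈ T, coeff α ((b : L) • MvPolynomial.map (algebraMap K L) (gbAux g b)) := by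
          refine Finset.sum_congr rfl ?_
          intro b _
          rw [MvPolynomial.coeff_smul, MvPolynomial.coeff_map, gbAux_coeff, smul_eq_mul,
            Algebra.smul_def, mul_comm]
          congr 1
          simp [hB, Module.Basis.ofVectorSpace_apply_self]
  rw [hdecomp, map_sum]
  refine Finset.sum_eq_zero ?_
  intro b _
  rw [smul_eq_C_mul, map_mul, hval b, mul_zero]
end

section
/- Let X ⊂ K^m be an irreducible affine variety over an algebraically closed field K and d an integer. If there exists a Zariski-dense subset U ⊆ X such that through every point of U passes a parametric curve of degree at most d contained in X, then through every point of X passes a parametric curve of degree at most d contained in X. -/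
open MvPolynomial Set Filter

variable {K : Type} [Field K]

lemma span_top_iff_det {β ι K : Type*} [Fintype β] [DecidableEq β] [Field K]
    (v : ι → (β → K)) :
    Submodule.span K (Set.range v) = ⊤ ↔
      ∃ f : β → ι, Matrix.det (Matrix.of fun e e' => v (f e') e) ≠ 0 := by
  constructor
  · intro hspan
    obtain ⟨b, hbsub, hbspan, hli⟩ := exists_linearIndependent K (Set.range v)
    rw [hspan] at hbspan
    have hfin : b.Finite := hli.setFinite
    have : Fintype b := hfin.fintype
    let B : Module.Basis b K (β → K) := Module.Basis.mk hli (by rw [Subtype.range_coe, hbspan])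
    have hcard : Fintype.card b = Fintype.card β := by
      rw [← Module.finrank_eq_card_basis B, Module.finrank_fintype_fun_eq_card]
    let g : β ≃ b := (Fintype.equivOfCardEq hcard).symm
    have hchoice : ∀ e : β, ∃ i : ι, v i = (g e : β → K) := fun e => hbsub (g e).2
    choose f hf using hchoice
    refine ⟨f, ?_⟩
    have hBd : Module.Basis β K (β → K) := B.reindex g.symm
    have : (Matrix.of fun e e' => v (f e') e) = (Pi.basisFun K β).toMatrix ⇑(B.reindex g.symm) := by
      ext e e'
      rw [Module.Basis.toMatrix_apply, Pi.basisFun_repr, Module.Basis.reindex_apply]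
      simp only [Matrix.of_apply, hf e', g, Module.Basis.mk_apply, B, Equiv.symm_symm]
    rw [this, ← Module.Basis.det_apply]
    exact ((Pi.basisFun K β).isUnit_det _).ne_zero
  · rintro ⟨f, hdet⟩
    cases isEmpty_or_nonempty β
    · have : Subsingleton (β → K) := ⟨fun a b => funext fun e => isEmptyElim e⟩
      exact Subsingleton.elim _ _
    · have hunit : IsUnit (Matrix.of fun e e' => v (f e') e) :=
        (Matrix.isUnit_iff_isUnit_det _).2 (isUnit_iff_ne_zero.2 hdet)
      have hli : LinearIndependent K fun e' => v (f e') := by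
        have := Matrix.linearIndependent_cols_iff_isUnit.2 hunit
        convert this using 2
        rfl
      have hsp := hli.span_eq_top_of_card_eq_finrank
        (by rw [Module.finrank_fintype_fun_eq_card])
      rw [eq_top_iff, ← hsp]
      exact Submodule.span_mono (Set.range_comp_subset_range f v)



namespace DenseCurvesAux

variable {m d : ℕ}

abbrev σt (m d : ℕ) : Type := Fin m × Fin d
abbrev Rx (K : Type) [Field K] (m : ℕ) := MvPolynomial (Fin m) K
abbrev Aa (K : Type) [Field K] (m d : ℕ) := MvPolynomial (σt m d) (Rx K m)

/-- weights -/
def wt (m d : ℕ) : σt m d → ℕ := fun jk => (jk.2 : ℕ) + 1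

lemma wt_pos (i : σt m d) : 0 < wt m d i := Nat.succ_pos _

lemma wt_le (i : σt m d) : wt m d i ≤ d := i.2.2

/-- universal curve -/
noncomputable def phiU (K : Type) [Field K] (m d : ℕ) (j : Fin m) : Polynomial (Aa K m d) :=
  Polynomial.C (C (X j)) + ∑ k : Fin d, Polynomial.C (X (j, k)) * Polynomial.X ^ ((k : ℕ) + 1)

noncomputable def ΦU (K : Type) [Field K] (m d : ℕ) :
    MvPolynomial (Fin m) K →+* Polynomial (Aa K m d) :=
  eval₂Hom (Polynomial.C.comp ((C : Rx K m →+* Aa K m d).comp (C : K →+* Rx K m))) (phiU K m d)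

/-- universal coefficient polynomials -/
noncomputable def EU (K : Type) [Field K] (m d : ℕ) (p : MvPolynomial (Fin m) K) (r : ℕ) :
    Aa K m d :=
  (ΦU K m d p).coeff r

/-- substitution x, a -/
noncomputable def subXA (x : Fin m → K) (a : σt m d → K) : Aa K m d →+* K :=
  (eval a).comp (MvPolynomial.map (eval x : Rx K m →+* K))

/-- concrete curve through x with coefficients a -/
noncomputable def ψc (x : Fin m → K) (a : σt m d → K) (j : Fin m) : Polynomial K :=
  Polynomial.C (x j) + ∑ k : Fin d, Polynomial.C (a (j, k)) * Polynomial.X ^ ((k : ℕ) + 1)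

lemma subXA_C (x : Fin m → K) (a : σt m d → K) (c : K) :
    subXA x a (C (C c)) = c := by
  simp [subXA]

lemma mapPsi (x : Fin m → K) (a : σt m d → K) :
    (Polynomial.mapRingHom (subXA x a)).comp (ΦU K m d)
      = eval₂Hom (Polynomial.C : K →+* Polynomial K) (ψc x a) := by
  apply MvPolynomial.ringHom_ext
  · intro c
    simp [ΦU, subXA]
  · intro j
    simp only [RingHom.coe_comp, Function.comp_apply, ΦU, eval₂Hom_X', Polynomial.coe_mapRingHom,
      eval₂Hom_X]
    simp [phiU, ψc, Polynomial.map_add, Polynomial.map_sum, Polynomial.map_mul, Polynomial.map_pow,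
      Polynomial.map_C, Polynomial.map_X, subXA]

lemma subXA_EU (x : Fin m → K) (a : σt m d → K) (p : MvPolynomial (Fin m) K) (r : ℕ) :
    subXA x a (EU K m d p r) = ((eval₂Hom (Polynomial.C : K →+* Polynomial K) (ψc x a)) p).coeff r := by
  have := congrArg (fun F => (F p).coeff r) (mapPsi x a)
  simpa [EU, Polynomial.coeff_map] using this

/-- evaluation of image polynomial -/
lemma eval_psi (φ : Fin m → Polynomial K) (p : MvPolynomial (Fin m) K) (t : K) :
    ((eval₂Hom (Polynomial.C : K →+* Polynomial K) φ) p).eval t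
      = eval (fun j => (φ j).eval t) p := by
  have : (Polynomial.evalRingHom t).comp (eval₂Hom (Polynomial.C : K →+* Polynomial K) φ)
      = eval₂Hom (RingHom.id K) (fun j => (φ j).eval t) := by
    apply MvPolynomial.ringHom_ext <;> intro c <;> simp
  have := congrArg (fun F => F p) this
  exact this


lemma phiU_coeff_hom (j : Fin m) (r : ℕ) :
    IsWeightedHomogeneous (wt m d) ((phiU K m d j).coeff r) r := by
  rw [phiU]
  rw [Polynomial.coeff_add, Polynomial.finset_sum_coeff]
  refine IsWeightedHomogeneous.add ?_ ?_
  · rcases Nat.eq_zero_or_pos r with h | h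
    · subst h
      simpa using isWeightedHomogeneous_C (wt m d) (X j : Rx K m)
    · rw [Polynomial.coeff_C, if_neg (Nat.pos_iff_ne_zero.mp h)]
      exact isWeightedHomogeneous_zero _ _ _
  · apply IsWeightedHomogeneous.sum
    intro k _
    rw [Polynomial.coeff_C_mul, Polynomial.coeff_X_pow]
    by_cases h : r = (k : ℕ) + 1
    · rw [if_pos h, mul_one]
      subst h
      exact isWeightedHomogeneous_X (R := Rx K m) (wt m d) ((j, k) : σt m d)
    · rw [if_neg h, mul_zero]
      exact isWeightedHomogeneous_zero _ _ _

lemma EU_hom (p : MvPolynomial (Fin m) K) : ∀ r : ℕ,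
    IsWeightedHomogeneous (wt m d) (EU K m d p r) r := by
  induction p using MvPolynomial.induction_on with
  | C c =>
    intro r
    rw [EU, ΦU, eval₂Hom_C]
    simp only [RingHom.coe_comp, Function.comp_apply]
    rcases Nat.eq_zero_or_pos r with h | h
    · subst h
      simpa using isWeightedHomogeneous_C (wt m d) ((C c : Rx K m))
    · rw [Polynomial.coeff_C, if_neg (Nat.pos_iff_ne_zero.mp h)]
      exact isWeightedHomogeneous_zero _ _ _
  | add p q hp hq =>
    intro r
    rw [EU, map_add, Polynomial.coeff_add]
    exact (hp r).add (hq r)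
  | mul_X p j hp =>
    intro r
    rw [EU, map_mul]
    have : (ΦU K m d (X j : MvPolynomial (Fin m) K)) = phiU K m d j := by
      rw [ΦU, eval₂Hom_X']
    rw [this, Polynomial.coeff_mul]
    apply IsWeightedHomogeneous.sum
    rintro ⟨r1, r2⟩ hmem
    rw [Finset.HasAntidiagonal.mem_antidiagonal] at hmem
    subst hmem
    exact (hp r1).mul (phiU_coeff_hom j r2)

lemma IsWeightedHomogeneous.map' {σ R S : Type*} [CommSemiring R] [CommSemiring S]
    (f : R →+* S) {w : σ → ℕ} {φ : MvPolynomial σ R} {n : ℕ}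
    (h : IsWeightedHomogeneous w φ n) :
    IsWeightedHomogeneous w (MvPolynomial.map f φ) n := by
  intro e he
  apply h
  intro h0
  rw [MvPolynomial.coeff_map, h0, map_zero] at he
  exact he rfl


section Elim

lemma bw_finite (m d W : ℕ) :
    {e : σt m d →₀ ℕ | Finsupp.weight (wt m d) e = W}.Finite := by
  apply Set.Finite.subset (Set.finite_Iic (Finsupp.equivFunOnFinite.symm fun _ : σt m d => W))
  intro e he
  rw [Set.mem_Iic, Finsupp.le_def]
  intro i
  have := Finsupp.le_weight (wt m d) (Nat.pos_iff_ne_zero.mp (wt_pos i)) e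
  rw [he] at this
  simpa using this

def BWs (m d W : ℕ) : Set (σt m d →₀ ℕ) := {e | Finsupp.weight (wt m d) e = W}

noncomputable instance (m d W : ℕ) : Fintype ↥(BWs m d W) := (bw_finite m d W).fintype

variable (S : Set (MvPolynomial (Fin m) K))

/-- evaluated coefficient polynomials -/
noncomputable def Ehat (x : Fin m → K) (p : MvPolynomial (Fin m) K) (r : ℕ) :
    MvPolynomial (σt m d) K :=
  MvPolynomial.map (eval x : Rx K m →+* K) (EU K m d p r)

lemma eval_Ehat (x : Fin m → K) (a : σt m d → K) (p : MvPolynomial (Fin m) K) (r : ℕ) :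
    eval a (Ehat x p r) = subXA x a (EU K m d p r) := rfl

def ιt (d : ℕ) (W : ℕ) : Type :=
  {z : MvPolynomial (Fin m) K × ℕ × (σt m d →₀ ℕ) //
    z.1 ∈ S ∧ 1 ≤ z.2.1 ∧ Finsupp.weight (wt m d) z.2.2 + z.2.1 = W}

noncomputable def Pent (W : ℕ) (e : ↥(BWs m d W)) (i : ιt S d W) : Rx K m :=
  if i.1.2.2 ≤ (e : σt m d →₀ ℕ) then
    MvPolynomial.coeff ((e : σt m d →₀ ℕ) - i.1.2.2) (EU K m d i.1.1 i.1.2.1) else 0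

noncomputable def vv (d W : ℕ) (x : Fin m → K) (i : ιt S d W) : ↥(BWs m d W) → K :=
  fun e => MvPolynomial.coeff (e : σt m d →₀ ℕ) (monomial i.1.2.2 (1:K) * Ehat x i.1.1 i.1.2.1)

lemma vv_eval (W : ℕ) (x : Fin m → K) (i : ιt S d W) (e : ↥(BWs m d W)) :
    vv S d W x i e = eval x (Pent S W e i) := by
  rw [vv, Pent, coeff_monomial_mul', apply_ite (eval x), map_zero]
  congr 1
  rw [one_mul, Ehat, MvPolynomial.coeff_map]

def genSet (d : ℕ) (x : Fin m → K) (W : ℕ) : Set (MvPolynomial (σt m d) K) :=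
  {q | ∃ p ∈ S, ∃ r u, 1 ≤ r ∧ Finsupp.weight (wt m d) u + r = W ∧
    q = monomial u (1:K) * Ehat x p r}

noncomputable def sdeg (d : ℕ) (x : Fin m → K) (W : ℕ) : Submodule K (MvPolynomial (σt m d) K) :=
  Submodule.span K (genSet S d x W)

noncomputable def Coord (m d W : ℕ) : MvPolynomial (σt m d) K →ₗ[K] (↥(BWs m d W) → K) where
  toFun q := fun e => coeff (e : σt m d →₀ ℕ) q
  map_add' := by intros; funext e; simp [coeff_add]
  map_smul' := by intros; funext e; simp [coeff_smul]

lemma range_vv (x : Fin m → K) (W : ℕ) :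
    Set.range (vv S d W x) = Coord m d W '' genSet S d x W := by
  ext y
  constructor
  · rintro ⟨i, rfl⟩
    exact ⟨monomial i.1.2.2 (1:K) * Ehat x i.1.1 i.1.2.1,
      ⟨i.1.1, i.2.1, i.1.2.1, i.1.2.2, i.2.2.1, i.2.2.2, rfl⟩, rfl⟩
  · rintro ⟨q, ⟨p, hp, r, u, hr, hW, rfl⟩, rfl⟩
    exact ⟨⟨(p, r, u), hp, hr, hW⟩, rfl⟩

lemma genSet_hom (x : Fin m → K) (W : ℕ) (q : MvPolynomial (σt m d) K)
    (hq : q ∈ genSet S d x W) : q ∈ weightedHomogeneousSubmodule K (wt m d) W := by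
  obtain ⟨p, _, r, u, _, hW, rfl⟩ := hq
  rw [mem_weightedHomogeneousSubmodule]
  have h1 : IsWeightedHomogeneous (wt m d) (monomial u (1:K)) (Finsupp.weight (wt m d) u) :=
    isWeightedHomogeneous_monomial _ _ _ rfl
  have h2 : IsWeightedHomogeneous (wt m d) (Ehat x p r) r :=
    IsWeightedHomogeneous.map' _ (EU_hom p r)
  rw [← hW]
  exact h1.mul h2

lemma sdeg_le (x : Fin m → K) (W : ℕ) :
    sdeg S d x W ≤ weightedHomogeneousSubmodule K (wt m d) W :=
  Submodule.span_le.mpr (genSet_hom S x W)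

lemma coord_inj (W : ℕ) (q : MvPolynomial (σt m d) K)
    (hq : q ∈ weightedHomogeneousSubmodule K (wt m d) W) (h0 : Coord m d W q = 0) :
    q = 0 := by
  rw [mem_weightedHomogeneousSubmodule] at hq
  ext e
  by_cases he : Finsupp.weight (wt m d) e = W
  · have := congrFun h0 ⟨e, he⟩
    simpa [Coord] using this
  · rw [coeff_zero]
    by_contra hc
    exact he (hq hc)

lemma key2 (x : Fin m → K) (W : ℕ) :
    weightedHomogeneousSubmodule K (wt m d) W ≤ sdeg S d x W ↔
      Submodule.span K (Set.range (vv S d W x)) = ⊤ := by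
  rw [range_vv, ← Submodule.map_span]
  constructor
  · intro hle
    rw [eq_top_iff, ← (Pi.basisFun K ↥(BWs m d W)).span_eq]
    rw [Submodule.span_le]
    rintro y ⟨e, rfl⟩
    have hmem : (monomial (e : σt m d →₀ ℕ) (1:K)) ∈ sdeg S d x W := by
      apply hle
      rw [mem_weightedHomogeneousSubmodule]
      exact isWeightedHomogeneous_monomial _ _ _ e.2
    have : Coord m d W (monomial (e : σt m d →₀ ℕ) (1:K)) = Pi.basisFun K ↥(BWs m d W) e := by
      funext e'
      simp only [Coord, LinearMap.coe_mk, AddHom.coe_mk, coeff_monomial, Pi.basisFun_apply]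
      by_cases h : e = e'
      · subst h; simp
      · rw [if_neg (fun hc => h (Subtype.ext hc)), Pi.single_apply, if_neg (Ne.symm h)]
    rw [← this]
    exact Submodule.mem_map_of_mem hmem
  · intro htop
    intro q hq
    have : Coord m d W q ∈ Submodule.map (Coord m d W) (sdeg S d x W) := by
      rw [sdeg, htop]; trivial
    obtain ⟨g, hg, hgq⟩ := this
    have hq' : q - g ∈ weightedHomogeneousSubmodule K (wt m d) W :=
      Submodule.sub_mem _ hq (sdeg_le S x W hg)
    have : q - g = 0 := coord_inj W _ hq' (by rw [map_sub, hgq, sub_self])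
    rwa [sub_eq_zero.mp this]

lemma key2b (x : Fin m → K) (W : ℕ) :
    weightedHomogeneousSubmodule K (wt m d) W ≤ sdeg S d x W ↔
      ∃ f : ↥(BWs m d W) → ιt S d W,
        eval x (Matrix.det (Matrix.of fun e e' => Pent S W e (f e'))) ≠ 0 := by
  rw [key2, span_top_iff_det]
  apply exists_congr
  intro f
  rw [RingHom.map_det]
  congr! 2
  ext e e'
  simp [Matrix.map, vv_eval]

end Elim


section Core
variable (S : Set (MvPolynomial (Fin m) K))

def gset (d : ℕ) (x : Fin m → K) : Set (MvPolynomial (σt m d) K) :=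
  {q | ∃ p ∈ S, ∃ r, 1 ≤ r ∧ q = Ehat x p r}

lemma graded_piece (x : Fin m → K) (W : ℕ) (f : MvPolynomial (σt m d) K)
    (hf : IsWeightedHomogeneous (wt m d) f W)
    (hmem : f ∈ Ideal.span (gset S d x)) :
    f ∈ sdeg S d x W := by
  obtain ⟨c, hsupp, rfl⟩ := Submodule.mem_span_set.mp hmem
  rw [← hf.weightedHomogeneousComponent_same]
  rw [Finsupp.sum, map_sum]
  apply Submodule.sum_mem
  intro g hg
  obtain ⟨p, hpS, r, hr, rfl⟩ := hsupp hg
  have hEhom : IsWeightedHomogeneous (wt m d) (Ehat x p r) r :=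
    IsWeightedHomogeneous.map' _ (EU_hom p r)
  set cg := c (Ehat x p r) with hcg
  have : cg • Ehat x p r = ∑ u ∈ cg.support, C (coeff u cg) * (monomial u (1:K) * Ehat x p r) := by
    rw [smul_eq_mul]
    conv_lhs => rw [cg.as_sum]
    rw [Finset.sum_mul]
    congr 1
    funext u
    rw [← mul_assoc, C_mul_monomial, mul_one]
  rw [this, map_sum]
  apply Submodule.sum_mem
  intro u _
  rw [weightedHomogeneousComponent_C_mul]
  have hhom : IsWeightedHomogeneous (wt m d) (monomial u (1:K) * Ehat x p r)
      (Finsupp.weight (wt m d) u + r) :=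
    (isWeightedHomogeneous_monomial _ _ _ rfl).mul hEhom
  by_cases hWu : Finsupp.weight (wt m d) u + r = W
  · rw [IsWeightedHomogeneous.weightedHomogeneousComponent_same (hWu ▸ hhom)]
    rw [← MvPolynomial.smul_eq_C_mul]
    apply Submodule.smul_mem
    apply Submodule.subset_span
    exact ⟨p, hpS, r, u, hr, hWu, rfl⟩
  · rw [IsWeightedHomogeneous.weightedHomogeneousComponent_ne _ hhom (fun hc => hWu hc.symm)]
    rw [mul_zero]
    exact Submodule.zero_mem _

lemma eval_sdeg_zero (x : Fin m → K) (a : σt m d → K) (W : ℕ)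
    (hav : ∀ p ∈ S, ∀ r, 1 ≤ r → eval a (Ehat x p r) = 0)
    {q : MvPolynomial (σt m d) K} (hq : q ∈ sdeg S d x W) :
    eval a q = 0 := by
  induction hq using Submodule.span_induction with
  | mem q hq =>
    obtain ⟨p, hpS, r, u, hr, hW, rfl⟩ := hq
    rw [map_mul, hav p hpS r hr, mul_zero]
  | zero => exact map_zero _
  | add p q _ _ hp hq => rw [map_add, hp, hq, add_zero]
  | smul c q _ hq => rw [MvPolynomial.smul_eq_C_mul, map_mul, hq, mul_zero]

lemma weight_single_calc (i : σt m d) (q : ℕ) :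
    Finsupp.weight (wt m d) (Finsupp.single i q) = q * wt m d i := by
  rw [Finsupp.weight_apply, Finsupp.sum_single_index]
  · rw [smul_eq_mul]
  · rw [zero_smul]

lemma L1 [IsAlgClosed K] (x : Fin m → K) :
    (∃ a : σt m d → K, a ≠ 0 ∧ ∀ p ∈ S, ∀ r, 1 ≤ r → eval a (Ehat x p r) = 0) ↔
    ∀ W, 0 < W → d.factorial ∣ W →
      ¬ (weightedHomogeneousSubmodule K (wt m d) W ≤ sdeg S d x W) := by
  constructor
  · rintro ⟨a, ha0, hav⟩ W hW hdvd hle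
    obtain ⟨i0, hi0⟩ := Function.ne_iff.mp ha0
    have hdvd2 : wt m d i0 ∣ W :=
      dvd_trans (Nat.dvd_factorial (wt_pos i0) (wt_le i0)) hdvd
    set q := W / wt m d i0 with hqdef
    have hqW : q * wt m d i0 = W := Nat.div_mul_cancel hdvd2
    have hq0 : q ≠ 0 := by
      intro h; rw [h, zero_mul] at hqW; omega
    have hmem : (X i0 ^ q : MvPolynomial (σt m d) K) ∈ sdeg S d x W := by
      apply hle
      rw [X_pow_eq_monomial, mem_weightedHomogeneousSubmodule]
      exact isWeightedHomogeneous_monomial _ _ _ ((weight_single_calc i0 q).trans hqW)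
    have := eval_sdeg_zero S x a W hav hmem
    rw [map_pow, eval_X] at this
    exact hi0 (pow_eq_zero_iff hq0 |>.mp this)
  · intro hW
    by_contra hno
    push_neg at hno
    set I := Ideal.span (gset S d x) with hI
    have hzl : MvPolynomial.zeroLocus K I ⊆ {0} := by
      intro a ha
      by_contra ha0
      obtain ⟨p, hpS, r, hr, hne⟩ := hno a ha0
      exact hne (MvPolynomial.mem_zeroLocus_iff.mp ha _
        (Ideal.subset_span ⟨p, hpS, r, hr, rfl⟩))
    have hX : ∀ i : σt m d, ∃ n : ℕ, (X i : MvPolynomial (σt m d) K) ^ n ∈ I := by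
      intro i
      have : (X i : MvPolynomial (σt m d) K) ∈ I.radical := by
        rw [← MvPolynomial.vanishingIdeal_zeroLocus_eq_radical (K := K)]
        rw [MvPolynomial.mem_vanishingIdeal_iff]
        intro a ha
        have := hzl ha
        rw [Set.mem_singleton_iff] at this
        rw [this, aeval_X]
        rfl
      exact this
    choose n hn using hX
    set N0 := (Finset.univ.sup n) + 1 with hN0
    have hXN : ∀ i : σt m d, (X i : MvPolynomial (σt m d) K) ^ N0 ∈ I := by
      intro i
      have hle : n i ≤ N0 := le_trans (Finset.le_sup (Finset.mem_univ i)) (Nat.le_succ _)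
      have : (X i : MvPolynomial (σt m d) K) ^ N0
          = X i ^ (N0 - n i) * X i ^ n i := by
        rw [← pow_add]
        congr 1
        omega
      rw [this]
      exact Ideal.mul_mem_left _ _ (hn i)
    set W := d.factorial * (d * (m * d) * N0 + 1) with hWdef
    have hWpos : 0 < W := Nat.mul_pos (Nat.factorial_pos d) (Nat.succ_pos _)
    have hWd : d.factorial ∣ W := Dvd.intro _ rfl
    apply hW W hWpos hWd
    intro f hf
    rw [mem_weightedHomogeneousSubmodule] at hf
    apply graded_piece S x W f hf
    -- f ∈ I
    rw [f.as_sum]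
    apply Ideal.sum_mem
    intro e he
    have hew : Finsupp.weight (wt m d) e = W := hf (mem_support_iff.mp he)
    -- some exponent is large
    have hbig : ∃ i : σt m d, N0 ≤ e i := by
      by_contra hsmall
      push_neg at hsmall
      have hbound : Finsupp.weight (wt m d) e ≤ (m * d) * (N0 * d) := by
        rw [Finsupp.weight_apply, Finsupp.sum]
        calc ∑ i ∈ e.support, e i • wt m d i
            ≤ ∑ i ∈ e.support, N0 * d := by
              apply Finset.sum_le_sum
              intro i _
              have h1 : e i ≤ N0 := le_of_lt (hsmall i)
              have h2 : wt m d i ≤ d := wt_le i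
              exact Nat.mul_le_mul h1 h2
          _ ≤ ∑ _i ∈ (Finset.univ : Finset (σt m d)), N0 * d := by
              apply Finset.sum_le_sum_of_subset (Finset.subset_univ _)
          _ = (m * d) * (N0 * d) := by
              rw [Finset.sum_const, smul_eq_mul]
              congr 1
              simp [Fintype.card_prod]
      rw [hew] at hbound
      have : d.factorial * (d * (m * d) * N0 + 1) ≤ m * d * (N0 * d) := hbound
      have hfac : 1 ≤ d.factorial := Nat.factorial_pos d
      nlinarith [Nat.factorial_pos d]
    obtain ⟨i, hi⟩ := hbig
    have hsle : Finsupp.single i N0 ≤ e := Finsupp.single_le_iff.mpr hi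
    have : monomial e (coeff e f)
        = monomial (e - Finsupp.single i N0) (coeff e f) * X i ^ N0 := by
      rw [X_pow_eq_monomial, monomial_mul, mul_one, tsub_add_cancel_of_le hsle]
    rw [this]
    exact Ideal.mul_mem_left _ _ (hXN i)

end Core


section Curves
variable (S : Set (MvPolynomial (Fin m) K))

lemma ψc_eval_zero (x : Fin m → K) (a : σt m d → K) (j : Fin m) :
    (ψc x a j).eval 0 = x j := by
  simp [ψc, Polynomial.eval_finset_sum]

lemma ψc_coeff (x : Fin m → K) (a : σt m d → K) (j : Fin m) (r : ℕ) :
    (ψc x a j).coeff r =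
      if h : 1 ≤ r ∧ r ≤ d then a (j, ⟨r - 1, by omega⟩)
      else if r = 0 then x j else 0 := by
  rw [ψc, Polynomial.coeff_add, Polynomial.finset_sum_coeff]
  have hterm : ∀ k' : Fin d,
      (Polynomial.C (a (j, k')) * Polynomial.X ^ ((k' : ℕ) + 1)).coeff r
        = if h : 1 ≤ r ∧ r ≤ d then
            (if k' = (⟨r - 1, by omega⟩ : Fin d) then a (j, k') else 0) else 0 := by
    intro k'
    have hk2 := k'.2
    rw [Polynomial.coeff_C_mul, Polynomial.coeff_X_pow]
    by_cases h : r = (k' : ℕ) + 1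
    · have hb : 1 ≤ r ∧ r ≤ d := ⟨by omega, by omega⟩
      rw [if_pos h, mul_one, dif_pos hb, if_pos]
      apply Fin.ext
      simp
      omega
    · rw [if_neg h, mul_zero]
      by_cases hb : 1 ≤ r ∧ r ≤ d
      · rw [dif_pos hb, if_neg]
        intro hk
        apply h
        have : (k' : ℕ) = r - 1 := by rw [hk]
        omega
      · rw [dif_neg hb]
  rw [Finset.sum_congr rfl fun k' _ => hterm k']
  by_cases hb : 1 ≤ r ∧ r ≤ d
  · simp only [dif_pos hb]
    rw [Polynomial.coeff_C, if_neg (by omega), zero_add,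
      Finset.sum_ite_eq' Finset.univ (⟨r - 1, by omega⟩ : Fin d) (fun k' => a (j, k'))]
    simp
  · simp only [dif_neg hb]
    rw [Finset.sum_const_zero, add_zero, Polynomial.coeff_C]

lemma ψc_natDegree (x : Fin m → K) (a : σt m d → K) (j : Fin m) :
    (ψc x a j).natDegree ≤ d := by
  rw [ψc]
  apply le_trans (Polynomial.natDegree_add_le _ _)
  rw [max_le_iff]
  constructor
  · simp
  · apply Polynomial.natDegree_sum_le_of_forall_le
    intro k _
    apply le_trans (Polynomial.natDegree_C_mul_le _ _)
    rw [Polynomial.natDegree_X_pow]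
    omega

lemma curve_of_witness [Infinite K] (x : Fin m → K) (hxX : ∀ p ∈ S, eval x p = 0)
    (a : σt m d → K) (ha0 : a ≠ 0)
    (hav : ∀ p ∈ S, ∀ r, 1 ≤ r → eval a (Ehat x p r) = 0) :
    HasParamCurveThrough {y : Fin m → K | ∀ p ∈ S, eval y p = 0} d x := by
  refine ⟨ψc x a, fun j => ψc_natDegree x a j, ?_, ?_, 0, funext fun j => ψc_eval_zero x a j⟩
  · obtain ⟨⟨j, k⟩, hjk⟩ := Function.ne_iff.mp ha0
    refine ⟨j, ?_⟩
    by_contra hdeg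
    push_neg at hdeg
    have h0 : (ψc x a j).natDegree < (k : ℕ) + 1 := by omega
    have := Polynomial.coeff_eq_zero_of_natDegree_lt h0
    have hk2 := k.2
    rw [ψc_coeff, dif_pos (⟨by omega, by omega⟩ : 1 ≤ (k : ℕ) + 1 ∧ (k : ℕ) + 1 ≤ d)] at this
    apply hjk
    have hkk : (⟨(k : ℕ) + 1 - 1, by omega⟩ : Fin d) = k := by
      apply Fin.ext
      simp
    rw [hkk] at this
    exact this
  · intro t p hp
    have hQ : (eval₂Hom (Polynomial.C : K →+* Polynomial K) (ψc x a)) p = 0 := by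
      apply Polynomial.ext
      intro r
      rw [Polynomial.coeff_zero]
      rcases Nat.eq_zero_or_pos r with hr | hr
      · subst hr
        rw [Polynomial.coeff_zero_eq_eval_zero, eval_psi]
        have : (fun j => (ψc x a j).eval 0) = x := funext fun j => ψc_eval_zero x a j
        rw [this]
        exact hxX p hp
      · rw [← subXA_EU, ← eval_Ehat]
        exact hav p hp r hr
    have := eval_psi (ψc x a) p t
    rw [hQ] at this
    simp only [Polynomial.eval_zero] at this
    exact this.symm

lemma witness_of_curve [Infinite K] (x : Fin m → K)
    (hc : HasParamCurveThrough {y : Fin m → K | ∀ p ∈ S, eval y p = 0} d x)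
    :
    ∃ a : σt m d → K, a ≠ 0 ∧ ∀ p ∈ S, ∀ r, 1 ≤ r → eval a (Ehat x p r) = 0 := by
  obtain ⟨φ, hφd, ⟨j0, hj0⟩, hφX, t₀, ht₀⟩ := hc
  set ψ : Fin m → Polynomial K := fun j => (φ j).comp (Polynomial.X + Polynomial.C t₀) with hψ
  have hdeg : ∀ j, (ψ j).natDegree = (φ j).natDegree := by
    intro j
    rw [hψ, Polynomial.natDegree_comp, Polynomial.natDegree_X_add_C, mul_one]
  have heval : ∀ j t, (ψ j).eval t = (φ j).eval (t + t₀) := by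
    intro j t
    rw [hψ]
    simp [Polynomial.eval_comp]
  have hψ0 : ∀ j, (ψ j).eval 0 = x j := by
    intro j
    rw [heval, zero_add]
    exact congrFun ht₀ j
  set a : σt m d → K := fun jk => (ψ jk.1).coeff ((jk.2 : ℕ) + 1) with ha
  have hψc : ∀ j, ψc x a j = ψ j := by
    intro j
    apply Polynomial.ext
    intro r
    rw [ψc_coeff]
    rcases Nat.eq_zero_or_pos r with hr | hr
    · subst hr
      rw [dif_neg (by omega), if_pos rfl, Polynomial.coeff_zero_eq_eval_zero, hψ0]
    · by_cases hrd : r ≤ d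
      · rw [dif_pos ⟨hr, hrd⟩, ha]
        simp only
        congr 1
        omega
      · rw [dif_neg (by omega), if_neg (by omega)]
        symm
        apply Polynomial.coeff_eq_zero_of_natDegree_lt
        rw [hdeg]
        have := hφd j
        omega
  refine ⟨a, ?_, ?_⟩
  · have hn : 0 < (ψ j0).natDegree := by rw [hdeg]; exact hj0
    have hne : ψ j0 ≠ 0 := fun h => by rw [h] at hn; simp at hn
    have hlc : (ψ j0).coeff (ψ j0).natDegree ≠ 0 := by
      rw [← Polynomial.leadingCoeff]
      exact Polynomial.leadingCoeff_ne_zero.mpr hne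
    have hd' : (ψ j0).natDegree ≤ d := by rw [hdeg]; exact hφd j0
    intro h0
    apply hlc
    have : a (j0, ⟨(ψ j0).natDegree - 1, by omega⟩) = 0 := congrFun h0 _
    rw [ha] at this
    simp only at this
    rw [← this]
    congr 1
    omega
  · intro p hp r hr
    rw [eval_Ehat, subXA_EU]
    have hψeq : ψc x a = ψ := funext hψc
    rw [hψeq]
    have hQ : (eval₂Hom (Polynomial.C : K →+* Polynomial K) ψ) p = 0 := by
      apply Polynomial.funext
      intro t
      rw [eval_psi, Polynomial.eval_zero]
      have : (fun j => (ψ j).eval t) = fun j => (φ j).eval (t + t₀) :=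
        funext fun j => heval j t
      rw [this]
      exact hφX (t + t₀) p hp
    rw [hQ, Polynomial.coeff_zero]

end Curves


section Final
variable (S : Set (MvPolynomial (Fin m) K))

def DetSet (d : ℕ) : Set (Rx K m) :=
  {q | ∃ W, 0 < W ∧ d.factorial ∣ W ∧ ∃ f : ↥(BWs m d W) → ιt S d W,
    q = Matrix.det (Matrix.of fun e e' => Pent S W e (f e'))}

lemma det_iff [IsAlgClosed K] (x : Fin m → K) :
    (∀ q ∈ DetSet S d, eval x q = 0) ↔
    (∃ a : σt m d → K, a ≠ 0 ∧ ∀ p ∈ S, ∀ r, 1 ≤ r → eval a (Ehat x p r) = 0) := by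
  rw [L1 S x]
  constructor
  · intro h W hW hdvd hle
    obtain ⟨f, hf⟩ := (key2b S x W).mp hle
    exact hf (h _ ⟨W, hW, hdvd, f, rfl⟩)
  · rintro h q ⟨W, hW, hdvd, f, rfl⟩
    by_contra hne
    exact h W hW hdvd ((key2b S x W).mpr ⟨f, hne⟩)

end Final
end DenseCurvesAux

/-- If a Zariski-dense subset of an irreducible affine variety `X` is covered by
parametric curves of degree at most `d` contained in `X`, then so is all of `X`. -/
theorem dense_curves_cover_all [IsAlgClosed K] {m d : ℕ}
    {X : Set (Fin m → K)} (hX : IrredAlgSet X) {U : Set (Fin m → K)}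
    (hUX : U ⊆ X) (hdense : X ⊆ zclosure U)
    (hcur : ∀ x ∈ U, HasParamCurveThrough X d x) :
    ∀ x ∈ X, HasParamCurveThrough X d x := by
  classical
  obtain ⟨S, hS⟩ := hX.1
  set G : Set (Fin m → K) :=
    {y | ∀ p ∈ S ∪ DenseCurvesAux.DetSet S d, eval y p = 0} with hG
  have hUG : U ⊆ G := by
    intro u hu
    have huX : u ∈ X := hUX hu
    have huS : ∀ p ∈ S, eval u p = 0 := by rw [hS] at huX; exact huX
    have hcu : HasParamCurveThrough {y : Fin m → K | ∀ p ∈ S, eval y p = 0} d u :=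
      hS ▸ hcur u hu
    obtain ⟨a, ha0, hav⟩ := DenseCurvesAux.witness_of_curve S u hcu
    intro p hp
    rcases hp with hp | hp
    · exact huS p hp
    · exact (DenseCurvesAux.det_iff S u).mpr ⟨a, ha0, hav⟩ p hp
  have hXG : X ⊆ G := fun y hy =>
    Set.mem_sInter.mp (hdense hy) G ⟨⟨S ∪ DenseCurvesAux.DetSet S d, rfl⟩, hUG⟩
  intro x hx
  have hxG := hXG hx
  have hxS : ∀ p ∈ S, eval x p = 0 := fun p hp => hxG p (Or.inl hp)
  have hxD : ∀ q ∈ DenseCurvesAux.DetSet S d, eval x q = 0 := fun q hq => hxG q (Or.inr hq)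
  obtain ⟨a, ha0, hav⟩ := (DenseCurvesAux.det_iff S x).mp hxD
  have := DenseCurvesAux.curve_of_witness S x hxS a ha0 hav
  rwa [← hS] at this
end
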